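/- arXiv:1701.08506 — 6 statements merged into one kernel-verified Lean document; each statement's English description precedes it below -/
import Mathlib

section
/- If H is a two-way-infinite Hamilton path in Cay(ℤ, S) with S finite, then the number of edges {u, v} of H with u ≤ 0 and v ≥ 1 is odd. -/
section aux

variable {H : SimpleGraph ℤ}

lemma reach_closed {C : Set ℤ} (hC : ∀ u v, u ∈ C → H.Adj u v → v ∈ C)
    {u v : ℤ} (h : H.Reachable u v) : u ∈ C → v ∈ C := by
  obtain ⟨w⟩ := h
  induction w with
  | nil => exact id
  | cons h' p ih => exact fun hu => ih (hC _ _ hu h')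

variable (n1 n2 : ℤ → ℤ)

def oth (a b : ℤ) : ℤ := if n1 b = a then n2 b else n1 b

def stp (pc : ℤ × ℤ) : ℤ × ℤ := (pc.2, oth n1 n2 pc.1 pc.2)

def pp (s0 : ℤ) (k : ℕ) : ℤ := ((stp n1 n2)^[k] (0, s0)).1

def FF (n : ℤ) : ℤ :=
  if 0 ≤ n then pp n1 n2 (n1 0) n.toNat else pp n1 n2 (n2 0) (-n).toNat

variable {n1 n2}

lemma pp_snd (s0 : ℤ) (k : ℕ) : ((stp n1 n2)^[k] (0, s0)).2 = pp n1 n2 s0 (k+1) := by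
  unfold pp
  rw [Function.iterate_succ_apply']
  rfl

lemma pp_zero (s0 : ℤ) : pp n1 n2 s0 0 = 0 := rfl

lemma pp_one (s0 : ℤ) : pp n1 n2 s0 1 = s0 := rfl

lemma pp_succ2 (s0 : ℤ) (k : ℕ) :
    pp n1 n2 s0 (k+2) = oth n1 n2 (pp n1 n2 s0 k) (pp n1 n2 s0 (k+1)) := by
  have h1 : pp n1 n2 s0 (k+2) = ((stp n1 n2)^[k+1] (0, s0)).2 := (pp_snd s0 (k+1)).symm
  rw [Function.iterate_succ_apply'] at h1
  rw [h1]
  show oth n1 n2 (((stp n1 n2)^[k] (0,s0)).1) (((stp n1 n2)^[k] (0,s0)).2) = _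
  rw [pp_snd]
  rfl

variable (hne : ∀ v, n1 v ≠ n2 v) (hset : ∀ v, H.neighborSet v = {n1 v, n2 v})
include hne hset

lemma oth_spec {a b : ℤ} (hab : H.Adj a b) :
    H.Adj b (oth n1 n2 a b) ∧ oth n1 n2 a b ≠ a := by
  have h1 : n1 b ∈ H.neighborSet b := by rw [hset]; exact Set.mem_insert _ _
  have h2 : n2 b ∈ H.neighborSet b := by rw [hset]; exact Set.mem_insert_of_mem _ rfl
  unfold oth
  split
  · next h => exact ⟨h2, fun hc => hne b (h.trans hc.symm)⟩
  · next h => exact ⟨h1, h⟩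

lemma pp_adj {s0 : ℤ} (hs0 : H.Adj 0 s0) (k : ℕ) :
    H.Adj (pp n1 n2 s0 k) (pp n1 n2 s0 (k+1)) ∧ pp n1 n2 s0 (k+2) ≠ pp n1 n2 s0 k := by
  induction k with
  | zero =>
    have hadj : H.Adj (pp n1 n2 s0 0) (pp n1 n2 s0 1) := by rw [pp_zero, pp_one]; exact hs0
    refine ⟨hadj, ?_⟩
    rw [pp_succ2]
    exact (oth_spec hne hset hadj).2
  | succ k ih =>
    have hadj : H.Adj (pp n1 n2 s0 (k+1)) (pp n1 n2 s0 (k+2)) := by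
      rw [pp_succ2]
      exact (oth_spec hne hset ih.1).1
    refine ⟨hadj, ?_⟩
    rw [show k+1+2 = (k+1)+2 from rfl, pp_succ2]
    exact (oth_spec hne hset hadj).2


lemma adj0_n1 : H.Adj 0 (n1 0) := by
  have : n1 0 ∈ H.neighborSet 0 := by rw [hset]; exact Set.mem_insert _ _
  exact this

lemma adj0_n2 : H.Adj 0 (n2 0) := by
  have : n2 0 ∈ H.neighborSet 0 := by rw [hset]; exact Set.mem_insert_of_mem _ rfl
  exact this

omit hne hset

lemma FF_nonneg {n : ℤ} (h : 0 ≤ n) : FF n1 n2 n = pp n1 n2 (n1 0) n.toNat := if_pos h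

lemma FF_nonpos {n : ℤ} (h : n ≤ 0) : FF n1 n2 n = pp n1 n2 (n2 0) (-n).toNat := by
  rcases eq_or_lt_of_le h with h0 | h0
  · rw [h0]
    show FF n1 n2 0 = _
    rw [FF_nonneg le_rfl]
    rw [show ((0:ℤ)).toNat = 0 from rfl, show ((-(0:ℤ))).toNat = 0 from rfl, pp_zero, pp_zero]
  · exact if_neg (by omega)

lemma FF_zero : FF n1 n2 0 = 0 := by rw [FF_nonneg le_rfl]; exact pp_zero _

include hne hset

lemma FF_adj (n : ℤ) : H.Adj (FF n1 n2 n) (FF n1 n2 (n+1)) := by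
  rcases le_or_gt 0 n with h | h
  · rw [FF_nonneg h, FF_nonneg (by omega : (0:ℤ) ≤ n+1),
      show (n+1).toNat = n.toNat + 1 by omega]
    exact (pp_adj hne hset (adj0_n1 hne hset) n.toNat).1
  · rw [FF_nonpos (by omega : n ≤ 0), FF_nonpos (by omega : n+1 ≤ 0),
      show (-n).toNat = (-(n+1)).toNat + 1 by omega]
    exact ((pp_adj hne hset (adj0_n2 hne hset) (-(n+1)).toNat).1).symm

lemma FF_ne2 (n : ℤ) : FF n1 n2 (n+2) ≠ FF n1 n2 n := by
  rcases le_or_gt 0 n with h | h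
  · rw [FF_nonneg h, FF_nonneg (by omega : (0:ℤ) ≤ n+2),
      show (n+2).toNat = n.toNat + 2 by omega]
    exact (pp_adj hne hset (adj0_n1 hne hset) n.toNat).2
  · rcases eq_or_lt_of_le (by omega : n ≤ -1) with h1 | h1
    · rw [h1]
      rw [show (-1:ℤ)+2 = 1 by ring, FF_nonneg (by omega : (0:ℤ) ≤ 1),
        FF_nonpos (by omega : (-1:ℤ) ≤ 0),
        show ((1:ℤ)).toNat = 1 from rfl, show ((-(-1:ℤ))).toNat = 1 from rfl, pp_one, pp_one]
      exact hne 0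
    · rw [FF_nonpos (by omega : n ≤ 0), FF_nonpos (by omega : n+2 ≤ 0),
        show (-n).toNat = (-(n+2)).toNat + 2 by omega]
      exact Ne.symm (pp_adj hne hset (adj0_n2 hne hset) (-(n+2)).toNat).2

variable (hdeg : ∀ v : ℤ, (H.neighborSet v).ncard = 2)
include hdeg

lemma FF_nbr (n : ℤ) :
    H.neighborSet (FF n1 n2 n) = {FF n1 n2 (n-1), FF n1 n2 (n+1)} := by
  have h1 : H.Adj (FF n1 n2 n) (FF n1 n2 (n-1)) := by
    have := FF_adj hne hset (n-1)
    rw [show n-1+1 = n by ring] at this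
    exact this.symm
  have h2 := FF_adj hne hset n
  have hd : FF n1 n2 (n-1) ≠ FF n1 n2 (n+1) := by
    have := FF_ne2 hne hset (n-1)
    rw [show n-1+2 = n+1 by ring] at this
    exact this.symm
  refine (Set.eq_of_subset_of_ncard_le ?_ ?_ ?_).symm
  · intro x hx
    rcases hx with h | h
    · rw [h]; exact h1
    · rw [Set.mem_singleton_iff] at h; rw [h]; exact h2
  · rw [hdeg (FF n1 n2 n), Set.ncard_pair hd]
  · obtain ⟨x, y, hxy, hN⟩ := Set.ncard_eq_two.mp (hdeg (FF n1 n2 n))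
    rw [hN]; exact Set.toFinite _

lemma FF_surj (hconn : H.Connected) : Function.Surjective (FF n1 n2) := by
  intro v
  have hC : ∀ u w : ℤ, u ∈ Set.range (FF n1 n2) → H.Adj u w → w ∈ Set.range (FF n1 n2) := by
    rintro u w ⟨m, rfl⟩ huw
    have hw : w ∈ H.neighborSet (FF n1 n2 m) := huw
    rw [FF_nbr hne hset hdeg] at hw
    rcases hw with h | h
    · exact ⟨m-1, h.symm⟩
    · rw [Set.mem_singleton_iff] at h; exact ⟨m+1, h.symm⟩
  exact reach_closed hC (hconn.preconnected 0 v) ⟨0, FF_zero⟩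

lemma FF_nbr_mem {n : ℤ} {w : ℤ} (hw : H.Adj (FF n1 n2 n) w) :
    w = FF n1 n2 (n-1) ∨ w = FF n1 n2 (n+1) := by
  have : w ∈ H.neighborSet (FF n1 n2 n) := hw
  rw [FF_nbr hne hset hdeg] at this
  rcases this with h | h
  · exact Or.inl h
  · exact Or.inr h

lemma FF_inj (hconn : H.Connected) : Function.Injective (FF n1 n2) := by
  have key : ∀ d : ℕ, 0 < d → ∀ a : ℤ, FF n1 n2 a ≠ FF n1 n2 (a + d) := by
    by_contra hcon
    push_neg at hcon
    obtain ⟨d0, hd0, a0, ha0⟩ := hcon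
    have hex : ∃ d : ℕ, 0 < d ∧ ∃ a : ℤ, FF n1 n2 a = FF n1 n2 (a + d) := ⟨d0, hd0, a0, ha0⟩
    classical
    obtain ⟨d, ⟨hdpos, a, ha⟩, hmin⟩ :
        ∃ d : ℕ, (0 < d ∧ ∃ a : ℤ, FF n1 n2 a = FF n1 n2 (a + d)) ∧
          ∀ m : ℕ, m < d → ¬(0 < m ∧ ∃ a : ℤ, FF n1 n2 a = FF n1 n2 (a + m)) :=
      ⟨Nat.find hex, Nat.find_spec hex, fun m hm => Nat.find_min hex hm⟩
    -- d ≠ 1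
    have hd1 : d ≠ 1 := by
      intro h1
      rw [h1] at ha
      exact H.ne_of_adj (by simpa using FF_adj hne hset a) (by simpa using ha)
    have hd2 : d ≠ 2 := by
      intro h2
      rw [h2] at ha
      exact FF_ne2 hne hset a (by simpa using ha.symm)
    have hd3 : 3 ≤ d := by omega
    set b := a + (d : ℤ) with hb
    have hNab : H.neighborSet (FF n1 n2 a) = H.neighborSet (FF n1 n2 b) := by rw [ha]
    have hpairs : ({FF n1 n2 (a-1), FF n1 n2 (a+1)} : Set ℤ)
        = {FF n1 n2 (b-1), FF n1 n2 (b+1)} := by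
      rw [← FF_nbr hne hset hdeg a, ← FF_nbr hne hset hdeg b, hNab]
    have hmem : FF n1 n2 (a+1) = FF n1 n2 (b-1) ∨ FF n1 n2 (a+1) = FF n1 n2 (b+1) := by
      have : FF n1 n2 (a+1) ∈ ({FF n1 n2 (b-1), FF n1 n2 (b+1)} : Set ℤ) := by
        rw [← hpairs]; exact Set.mem_insert_of_mem _ rfl
      simpa using this
    rcases hmem with hcase | hcase
    · -- smaller distance d - 2
      have : ¬(0 < d - 2 ∧ ∃ a : ℤ, FF n1 n2 a = FF n1 n2 (a + (d-2 : ℕ))) :=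
        hmin (d-2) (by omega)
      apply this
      refine ⟨by omega, a+1, ?_⟩
      rw [hcase]
      congr 1
      push_cast [Nat.cast_sub (by omega : 2 ≤ d)]
      omega
    · -- periodic case
      have hper : ∀ k : ℕ, FF n1 n2 (a + k) = FF n1 n2 (b + k)
          ∧ FF n1 n2 (a + k + 1) = FF n1 n2 (b + k + 1) := by
        intro k
        induction k with
        | zero => simpa using ⟨ha, hcase⟩
        | succ k ih =>
          obtain ⟨ih1, ih2⟩ := ih
          have hmem2 : FF n1 n2 (b + k + 2) = FF n1 n2 (a + k) ∨
              FF n1 n2 (b + k + 2) = FF n1 n2 (a + k + 2) := by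
            have hadj : H.Adj (FF n1 n2 (a + k + 1)) (FF n1 n2 (b + k + 2)) := by
              rw [ih2]
              have := FF_adj hne hset (b + k + 1)
              rw [show b + k + 1 + 1 = b + k + 2 by ring] at this
              exact this
            have := FF_nbr_mem hne hset hdeg hadj
            rw [show a + k + 1 - 1 = a + k by ring, show a + k + 1 + 1 = a + k + 2 by ring] at this
            exact this
          have hnb : FF n1 n2 (b + k + 2) ≠ FF n1 n2 (a + k) := by
            rw [ih1]
            exact FF_ne2 hne hset (b + k)
          have h2 : FF n1 n2 (b + k + 2) = FF n1 n2 (a + k + 2) := by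
            rcases hmem2 with h | h
            · exact absurd h hnb
            · exact h
          constructor
          · rw [show a + (k+1:ℕ) = a + k + 1 by push_cast; ring,
              show b + (k+1:ℕ) = b + k + 1 by push_cast; ring]
            exact ih2
          · rw [show a + (k+1:ℕ) + 1 = a + k + 2 by push_cast; ring,
              show b + (k+1:ℕ) + 1 = b + k + 2 by push_cast; ring]
            exact h2.symm
      have hleft : FF n1 n2 (a-1) = FF n1 n2 (b-1) := by
        have hadj : H.Adj (FF n1 n2 b) (FF n1 n2 (a-1)) := by
          rw [← ha]
          have := FF_adj hne hset (a-1)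
          rw [show a - 1 + 1 = a by ring] at this
          exact this.symm
        have := FF_nbr_mem hne hset hdeg hadj
        rcases this with h | h
        · exact h
        · exfalso
          rw [← hcase] at h
          have := FF_ne2 hne hset (a-1)
          rw [show a - 1 + 2 = a + 1 by ring] at this
          exact this h.symm
      -- finite closed set
      set C : Set ℤ := FF n1 n2 '' (Set.Icc a b) with hCdef
      have hCfin : C.Finite := (Set.finite_Icc a b).image _
      have hCclosed : ∀ u w : ℤ, u ∈ C → H.Adj u w → w ∈ C := by
        rintro u w ⟨n, hn, rfl⟩ huw
        rw [Set.mem_Icc] at hn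
        rcases FF_nbr_mem hne hset hdeg huw with h | h
        · rcases eq_or_lt_of_le hn.1 with he | hlt
          · rw [h, ← he, hleft]
            exact ⟨b-1, Set.mem_Icc.mpr ⟨by omega, by omega⟩, rfl⟩
          · exact ⟨n-1, Set.mem_Icc.mpr ⟨by omega, by omega⟩, h.symm⟩
        · rcases eq_or_lt_of_le hn.2 with he | hlt
          · rw [h, he, show b + 1 = b + (0:ℕ) + 1 by push_cast; ring, ← (hper 0).2,
              show a + (0:ℕ) + 1 = a + 1 by push_cast; ring]
            exact ⟨a+1, Set.mem_Icc.mpr ⟨by omega, by omega⟩, rfl⟩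
          · exact ⟨n+1, Set.mem_Icc.mpr ⟨by omega, by omega⟩, h.symm⟩
      have hall : ∀ v : ℤ, v ∈ C := by
        intro v
        exact reach_closed hCclosed (hconn.preconnected (FF n1 n2 a) v)
          ⟨a, Set.mem_Icc.mpr ⟨le_refl a, by omega⟩, rfl⟩
      exact (Set.infinite_univ (α := ℤ)).mono (fun v _ => hall v) hCfin
  intro x y hxy
  by_contra hne'
  rcases lt_or_gt_of_ne hne' with h | h
  · exact key (y - x).toNat (by omega) x (by rw [show x + ((y-x).toNat : ℤ) = y by omega]; exact hxy)
  · exact key (x - y).toNat (by omega) y (by rw [show y + ((x-y).toNat : ℤ) = x by omega]; exact hxy.symm)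

end aux

/-- Infinite circulant graph on ℤ: `u ~ v` iff `u - v ∈ S` or `v - u ∈ S`. -/
def cay (S : Set ℤ) : SimpleGraph ℤ where
  Adj u v := u ≠ v ∧ (u - v ∈ S ∨ v - u ∈ S)
  symm := by
    constructor
    intro u v h
    exact ⟨h.1.symm, h.2.symm⟩
  loopless := by
    constructor
    intro v h
    exact h.1 rfl

/-- `H` is a two-way-infinite Hamilton path of `G`: a connected spanning subgraph
in which every vertex has degree 2. -/
def IsHamPath (G H : SimpleGraph ℤ) : Prop :=
  H ≤ G ∧ H.Connected ∧ ∀ v : ℤ, (H.neighborSet v).ncard = 2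

/-- `G` decomposes into `k` edge-disjoint two-way-infinite Hamilton paths. -/
def HamDecomp (G : SimpleGraph ℤ) (k : ℕ) : Prop :=
  ∃ D : Fin k → SimpleGraph ℤ,
    (∀ i, IsHamPath G (D i)) ∧
    (∀ i j, i ≠ j → Disjoint (D i).edgeSet (D j).edgeSet) ∧
    ∀ e ∈ G.edgeSet, ∃ i, e ∈ (D i).edgeSet

theorem stmt3 (S : Finset ℤ) (h0 : (0:ℤ) ∉ S) (hinv : ∀ s ∈ S, -s ∈ S)
    (H : SimpleGraph ℤ) (hH : IsHamPath (cay ↑S) H) :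
    Odd {e ∈ H.edgeSet | ∃ u v : ℤ, e = s(u, v) ∧ u ≤ 0 ∧ 1 ≤ v}.ncard := by
  classical
  obtain ⟨hle, hconn, hdeg⟩ := hH
  have hch : ∀ v : ℤ, ∃ pq : ℤ × ℤ, pq.1 ≠ pq.2 ∧ H.neighborSet v = {pq.1, pq.2} := by
    intro v
    obtain ⟨x, y, hxy, hN⟩ := Set.ncard_eq_two.mp (hdeg v)
    exact ⟨(x, y), hxy, hN⟩
  choose pq hne0 hset0 using hch
  set n1 : ℤ → ℤ := fun v => (pq v).1 with hn1
  set n2 : ℤ → ℤ := fun v => (pq v).2 with hn2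
  have hne : ∀ v, n1 v ≠ n2 v := hne0
  have hset : ∀ v, H.neighborSet v = {n1 v, n2 v} := hset0
  set F : ℤ → ℤ := FF n1 n2 with hF
  have hFadj : ∀ n : ℤ, H.Adj (F n) (F (n+1)) := FF_adj hne hset
  have hFinj : Function.Injective F := FF_inj hne hset hdeg hconn
  have hFsurj : Function.Surjective F := FF_surj hne hset hdeg hconn
  have hFnbr : ∀ (n w : ℤ), H.Adj (F n) w → w = F (n-1) ∨ w = F (n+1) :=
    fun n w h => FF_nbr_mem hne hset hdeg h
  set M : ℕ := S.sup Int.natAbs with hM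
  have hMb : ∀ u v : ℤ, H.Adj u v → (u - v).natAbs ≤ M := by
    intro u v h
    rcases (hle h).2 with hs | hs
    · exact Finset.le_sup (Finset.mem_coe.mp hs)
    · rw [show u - v = -(v-u) by ring, Int.natAbs_neg]
      exact Finset.le_sup (Finset.mem_coe.mp hs)
  set K : Set ℤ := {n | (F n ≤ 0 ∧ 1 ≤ F (n+1)) ∨ (F (n+1) ≤ 0 ∧ 1 ≤ F n)} with hK
  have hKiff : ∀ n : ℤ, n ∈ K ↔ ¬(F n ≤ 0 ↔ F (n+1) ≤ 0) := by
    intro n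
    simp only [hK, Set.mem_setOf_eq]
    omega
  have hKfin : K.Finite := by
    apply Set.Finite.subset
      (Set.Finite.preimage (Function.Injective.injOn hFinj) (Set.finite_Icc (1 - (M:ℤ)) M))
    intro n hn
    have := hMb (F n) (F (n+1)) (hFadj n)
    simp only [Set.mem_preimage, Set.mem_Icc]
    simp only [hK, Set.mem_setOf_eq] at hn
    rcases hn with ⟨h1, h2⟩ | ⟨h1, h2⟩ <;> omega
  set N : ℕ := hKfin.toFinset.sup Int.natAbs with hN
  have hNb : ∀ n ∈ K, n.natAbs ≤ N := fun n hn => Finset.le_sup (hKfin.mem_toFinset.mpr hn)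
  set A : ℤ := -(N:ℤ) - 1 with hA
  set B : ℤ := (N:ℤ) + 1 with hB
  have hnoK : ∀ n : ℤ, n < A ∨ B ≤ n → n ∉ K := by
    intro n h hn
    have := hNb n hn
    omega
  have hsame : ∀ n : ℤ, n ∉ K → (F n ≤ 0 ↔ F (n+1) ≤ 0) := by
    intro n hn
    by_contra h
    exact hn ((hKiff n).mpr h)
  have hright : ∀ n : ℤ, B ≤ n → (F n ≤ 0 ↔ F B ≤ 0) :=
    Int.le_induction Iff.rfl
      (fun n hn ih => ((hsame n (hnoK n (Or.inr hn))).symm).trans ih)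
  have hleft : ∀ n : ℤ, n ≤ A → (F n ≤ 0 ↔ F A ≤ 0) :=
    Int.le_induction_down Iff.rfl
      (fun n hn ih => by
        have hs := hsame (n-1) (hnoK (n-1) (Or.inl (by omega)))
        rw [show n - 1 + 1 = n by ring] at hs
        exact hs.trans ih)
  have hABdiff : ¬(F A ≤ 0 ↔ F B ≤ 0) := by
    intro hiff
    by_cases hFB : F B ≤ 0
    · have hsub : F ⁻¹' (Set.Ici 1) ⊆ Set.Ioo A B := by
        intro n hn
        simp only [Set.mem_preimage, Set.mem_Ici] at hn
        simp only [Set.mem_Ioo]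
        constructor
        · by_contra h
          push_neg at h
          have := (hleft n (by omega)).mpr (hiff.mpr hFB)
          omega
        · by_contra h
          push_neg at h
          have := (hright n (by omega)).mpr hFB
          omega
      have hfin : (Set.Ici (1:ℤ)).Finite := by
        rw [← Set.image_preimage_eq (Set.Ici 1) hFsurj]
        exact ((Set.finite_Ioo A B).subset hsub).image F
      exact Set.Ici_infinite (1:ℤ) hfin
    · have hFA : ¬ F A ≤ 0 := fun h => hFB (hiff.mp h)
      have hsub : F ⁻¹' (Set.Iic 0) ⊆ Set.Ioo A B := by
        intro n hn
        simp only [Set.mem_preimage, Set.mem_Iic] at hn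
        simp only [Set.mem_Ioo]
        constructor
        · by_contra h
          push_neg at h
          have := (hleft n (by omega)).mp hn
          omega
        · by_contra h
          push_neg at h
          have := (hright n (by omega)).mp hn
          omega
      have hfin : (Set.Iic (0:ℤ)).Finite := by
        rw [← Set.image_preimage_eq (Set.Iic 0) hFsurj]
        exact ((Set.finite_Ioo A B).subset hsub).image F
      exact Set.Iic_infinite (0:ℤ) hfin
  set g : ℤ → ZMod 2 := fun n => if F n ≤ 0 then 0 else 1 with hg
  have htele : ∀ c : ℤ, A ≤ c → ∑ n ∈ Finset.Ico A c, (g (n+1) - g n) = g c - g A := by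
    refine Int.le_induction ?_ ?_
    · rw [Finset.Ico_self, Finset.sum_empty, sub_self]
    · intro c hc ih
      have hins : Finset.Ico A (c+1) = insert c (Finset.Ico A c) := by
        ext n
        simp only [Finset.mem_Ico, Finset.mem_insert]
        omega
      rw [hins, Finset.sum_insert (by simp [Finset.mem_Ico]), ih]
      ring
  set Kf : Finset ℤ := (Finset.Ico A B).filter (fun n => n ∈ K) with hKf
  have hKcoe : K = ↑Kf := by
    ext n
    simp only [hKf, Finset.coe_filter, Set.mem_setOf_eq, Finset.mem_Ico]
    constructor
    · intro hn
      refine ⟨?_, hn⟩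
      by_contra h
      exact hnoK n (by omega) hn
    · exact fun h => h.2
  have hterm : ∀ n : ℤ, g (n+1) - g n = if n ∈ K then (1 : ZMod 2) else 0 := by
    intro n
    by_cases hn : n ∈ K
    · have hx := (hKiff n).mp hn
      rw [if_pos hn]
      simp only [hg]
      by_cases h1 : F n ≤ 0 <;> by_cases h2 : F (n+1) ≤ 0
      · exact absurd (iff_of_true h1 h2) hx
      · rw [if_neg h2, if_pos h1]; decide
      · rw [if_pos h2, if_neg h1]; decide
      · exact absurd (iff_of_false h1 h2) hx
    · have hs := hsame n hn
      rw [if_neg hn]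
      simp only [hg]
      by_cases h1 : F n ≤ 0
      · rw [if_pos h1, if_pos (hs.mp h1)]; decide
      · rw [if_neg h1, if_neg (fun hh => h1 (hs.mpr hh))]; decide
  have hcard : ((Kf.card : ZMod 2)) = 1 := by
    have h1 : ∑ n ∈ Finset.Ico A B, (g (n+1) - g n) = g B - g A := htele B (by omega)
    have h2 : ∑ n ∈ Finset.Ico A B, (g (n+1) - g n)
        = ∑ n ∈ Finset.Ico A B, (if n ∈ K then (1:ZMod 2) else 0) :=
      Finset.sum_congr rfl (fun n _ => hterm n)
    have h3 : ∑ n ∈ Kf, (1:ZMod 2) = ∑ n ∈ Finset.Ico A B, (if n ∈ K then (1:ZMod 2) else 0) :=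
      Finset.sum_filter _ _
    have h4 : ∑ n ∈ Kf, (1:ZMod 2) = (Kf.card : ZMod 2) := by
      rw [Finset.sum_const, nsmul_eq_mul, mul_one]
    have h5 : g B - g A = 1 := by
      simp only [hg]
      by_cases hFA : F A ≤ 0 <;> by_cases hFB : F B ≤ 0
      · exact absurd (iff_of_true hFA hFB) hABdiff
      · rw [if_neg hFB, if_pos hFA]; decide
      · rw [if_pos hFB, if_neg hFA]; decide
      · exact absurd (iff_of_false hFA hFB) hABdiff
    rw [← h4, h3, ← h2, h1, h5]
  have hodd : Odd Kf.card := ZMod.natCast_eq_one_iff_odd.mp hcard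
  set φ : ℤ → Sym2 ℤ := fun n => s(F n, F (n+1)) with hφ
  have hXeq : {e ∈ H.edgeSet | ∃ u v : ℤ, e = s(u, v) ∧ u ≤ 0 ∧ 1 ≤ v} = φ '' K := by
    ext e
    simp only [Set.mem_setOf_eq, Set.mem_image]
    constructor
    · rintro ⟨heE, u, v, rfl, hu, hv⟩
      have hadj : H.Adj u v := H.mem_edgeSet.mp heE
      obtain ⟨m, hm⟩ := hFsurj u
      have hadj2 : H.Adj (F m) v := hm.symm ▸ hadj
      rcases hFnbr m v hadj2 with h | h
      · refine ⟨m - 1, ?_, ?_⟩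
        · simp only [hK, Set.mem_setOf_eq]
          right
          rw [show m - 1 + 1 = m by ring, hm]
          exact ⟨hu, h ▸ hv⟩
        · simp only [hφ]
          rw [show m - 1 + 1 = m by ring, ← h, hm, Sym2.eq_swap]
      · refine ⟨m, ?_, ?_⟩
        · simp only [hK, Set.mem_setOf_eq]
          left
          rw [hm, ← h]
          exact ⟨hu, hv⟩
        · simp only [hφ]
          rw [hm, ← h]
    · rintro ⟨n, hn, rfl⟩
      simp only [hK, Set.mem_setOf_eq] at hn
      refine ⟨H.mem_edgeSet.mpr (hFadj n), ?_⟩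
      rcases hn with ⟨h1, h2⟩ | ⟨h1, h2⟩
      · exact ⟨F n, F (n+1), rfl, h1, h2⟩
      · exact ⟨F (n+1), F n, Sym2.eq_swap.symm, h1, h2⟩
  have hφinj : Set.InjOn φ K := by
    intro n _ m _ h
    simp only [hφ, Sym2.eq_iff] at h
    rcases h with ⟨h1, h2⟩ | ⟨h1, h2⟩
    · exact hFinj h1
    · have e1 := hFinj h1
      have e2 := hFinj h2
      omega
  rw [hXeq, Set.ncard_image_of_injOn hφinj, hKcoe, Set.ncard_coe_finset]
  exact hodd
end

section
/- The graph Cay(ℤ, {±1, ±2}) does not admit a decomposition into 2 edge-disjoint two-way-infinite Hamilton paths. -/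
open Classical in
/-- indicator of an edge -/
noncomputable def bb (H : SimpleGraph ℤ) (u v : ℤ) : ℕ := if H.Adj u v then 1 else 0

/-- number of `H`-edges crossing the cut between `n` and `n+1` -/
noncomputable def cc (H : SimpleGraph ℤ) (n : ℤ) : ℕ :=
  bb H n (n+1) + bb H (n-1) (n+1) + bb H n (n+2)

lemma bb_comm (H : SimpleGraph ℤ) (u v : ℤ) : bb H u v = bb H v u := by
  unfold bb; rw [SimpleGraph.adj_comm]

lemma bb_le_one (H : SimpleGraph ℤ) (u v : ℤ) : bb H u v ≤ 1 := by
  unfold bb; split <;> omega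

lemma bb_eq_one_iff (H : SimpleGraph ℤ) (u v : ℤ) : bb H u v = 1 ↔ H.Adj u v := by
  unfold bb; split <;> simp_all

lemma bb_eq_zero_iff (H : SimpleGraph ℤ) (u v : ℤ) : bb H u v = 0 ↔ ¬ H.Adj u v := by
  unfold bb; split <;> simp_all

lemma cay_adj (u v : ℤ) :
    (cay ({1, 2} : Set ℤ)).Adj u v ↔ (v - u = 1 ∨ v - u = 2 ∨ u - v = 1 ∨ u - v = 2) := by
  show (u ≠ v ∧ _) ↔ _
  simp only [Set.mem_insert_iff, Set.mem_singleton_iff]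
  constructor
  · rintro ⟨h1, h2⟩; omega
  · intro h; refine ⟨by omega, by omega⟩

/-- degree equation -/
lemma deg_eq (H : SimpleGraph ℤ) (hle : H ≤ cay ({1, 2} : Set ℤ))
    (hdeg : ∀ v : ℤ, (H.neighborSet v).ncard = 2) (v : ℤ) :
    bb H (v-2) v + bb H (v-1) v + bb H v (v+1) + bb H v (v+2) = 2 := by
  classical
  have hset : H.neighborSet v =
      ((({v-2, v-1, v+1, v+2} : Finset ℤ).filter (fun u => H.Adj v u) : Finset ℤ) : Set ℤ) := by
    ext u
    simp only [SimpleGraph.mem_neighborSet, Finset.coe_filter, Set.mem_setOf_eq,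
      Finset.mem_insert, Finset.mem_singleton]
    constructor
    · intro h
      refine ⟨?_, h⟩
      have hd := (cay_adj v u).1 (hle h)
      omega
    · exact fun h => h.2
  have hcard : (({v-2, v-1, v+1, v+2} : Finset ℤ).filter (fun u => H.Adj v u)).card = 2 := by
    rw [← Set.ncard_coe_finset, ← hset, hdeg]
  rw [Finset.card_filter] at hcard
  rw [Finset.sum_insert (by simp only [Finset.mem_insert, Finset.mem_singleton]; push_neg; omega),
    Finset.sum_insert (by simp only [Finset.mem_insert, Finset.mem_singleton]; push_neg; omega),
    Finset.sum_insert (by simp only [Finset.mem_singleton]; omega),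
    Finset.sum_singleton] at hcard
  rw [bb_comm H (v-2) v, bb_comm H (v-1) v]
  unfold bb
  split_ifs at hcard ⊢ <;> omega

/-- key sum relation: `cc H n + cc H (n+1)` is even -/
lemma cc_sum (H : SimpleGraph ℤ) (hle : H ≤ cay ({1, 2} : Set ℤ))
    (hdeg : ∀ v : ℤ, (H.neighborSet v).ncard = 2) (n : ℤ) :
    cc H n + cc H (n+1) = 2 + 2 * bb H n (n+2) := by
  have h := deg_eq H hle hdeg (n+1)
  rw [show (n:ℤ)+1-2 = n-1 by ring] at h
  unfold cc
  rw [show (n:ℤ)+1-1 = n by ring, show (n:ℤ)+1+1 = n+2 by ring,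
    show (n:ℤ)+1+2 = n+3 by ring] at h ⊢
  omega

lemma cc_parity (H : SimpleGraph ℤ) (hle : H ≤ cay ({1, 2} : Set ℤ))
    (hdeg : ∀ v : ℤ, (H.neighborSet v).ncard = 2) (n : ℤ) :
    cc H n % 2 = cc H 0 % 2 := by
  have step : ∀ m : ℤ, cc H m % 2 = cc H (m+1) % 2 := by
    intro m
    have := cc_sum H hle hdeg m
    omega
  induction n using Int.induction_on with
  | zero => rfl
  | succ k ih => rw [← step k] at *; exact ih
  | pred k ih => rw [step (-(k:ℤ)-1)] at *; rw [show (-(k:ℤ)-1)+1 = -k by ring]; exact ih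

/-- any `H`-edge crossing the cut is one of the three candidates -/
lemma cross (H : SimpleGraph ℤ) (hle : H ≤ cay ({1, 2} : Set ℤ)) (n u v : ℤ)
    (hu : u ≤ n) (hv : n < v) (h : H.Adj u v) :
    (u = n ∧ v = n+1) ∨ (u = n-1 ∧ v = n+1) ∨ (u = n ∧ v = n+2) := by
  have hd := (cay_adj u v).1 (hle h)
  omega

/-- if some cut is not crossed, `H` is disconnected -/
lemma no_cross (H : SimpleGraph ℤ) (hle : H ≤ cay ({1, 2} : Set ℤ))
    (hconn : H.Connected) (n : ℤ) (h0 : cc H n = 0) : False := by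
  have key : ∀ u v : ℤ, u ≤ n → n < v → ¬ H.Adj u v := by
    intro u v hu hv h
    unfold cc at h0
    have h1 : ¬ H.Adj n (n+1) := by rw [← bb_eq_zero_iff]; omega
    have h2 : ¬ H.Adj (n-1) (n+1) := by rw [← bb_eq_zero_iff]; omega
    have h3 : ¬ H.Adj n (n+2) := by rw [← bb_eq_zero_iff]; omega
    rcases cross H hle n u v hu hv h with ⟨ha, hb⟩ | ⟨ha, hb⟩ | ⟨ha, hb⟩ <;>
      subst ha <;> subst hb <;> tauto
  have main : ∀ (u v : ℤ) (w : H.Walk u v), u ≤ n → n < v → False := by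
    intro u v w
    induction w with
    | nil => intro h1 h2; omega
    | @cons a x c h p ih =>
      intro h1 h2
      by_cases hx : x ≤ n
      · exact ih hx h2
      · exact key a x h1 (by omega) h
  obtain ⟨w⟩ := hconn n (n+1)
  exact main n (n+1) w (le_refl n) (by omega)

/-- if all edges of `H` have length 2, `H` is disconnected -/
lemma parity_contra (H : SimpleGraph ℤ) (hconn : H.Connected)
    (h2 : ∀ u v : ℤ, H.Adj u v → (v - u = 2 ∨ u - v = 2)) : False := by
  have main : ∀ (u v : ℤ) (w : H.Walk u v), u % 2 = v % 2 := by
    intro u v w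
    induction w with
    | nil => rfl
    | @cons a x c h p ih => have := h2 a x h; omega
  obtain ⟨w⟩ := hconn 0 1
  have := main 0 1 w
  omega

/-- the crucial contradiction: `H` a Ham path whose crossing numbers are even -/
lemma even_contra (H : SimpleGraph ℤ) (hle : H ≤ cay ({1, 2} : Set ℤ))
    (hdeg : ∀ v : ℤ, (H.neighborSet v).ncard = 2) (hconn : H.Connected)
    (hle3 : ∀ n : ℤ, cc H n ≤ 3) (heven : cc H 0 % 2 = 0) : False := by
  have hev : ∀ n : ℤ, cc H n % 2 = 0 := fun n => by rw [cc_parity H hle hdeg n, heven]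
  by_cases hz : ∃ n : ℤ, cc H n = 0
  · obtain ⟨n, hn⟩ := hz
    exact no_cross H hle hconn n hn
  · push_neg at hz
    have h2 : ∀ n : ℤ, cc H n = 2 := by
      intro n
      have := hev n; have := hle3 n; have := hz n; omega
    have hall2 : ∀ n : ℤ, H.Adj n (n+2) := by
      intro n
      have := cc_sum H hle hdeg n
      rw [h2 n, h2 (n+1)] at this
      rw [← bb_eq_one_iff]
      omega
    have hno1 : ∀ v : ℤ, ¬ H.Adj v (v+1) := by
      intro v
      have hd := deg_eq H hle hdeg v
      have ha : bb H (v-2) v = 1 := by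
        rw [bb_eq_one_iff]
        have := hall2 (v-2); rwa [show (v:ℤ)-2+2 = v by ring] at this
      have hb : bb H v (v+2) = 1 := (bb_eq_one_iff H v (v+2)).2 (hall2 v)
      rw [← bb_eq_zero_iff]
      omega
    refine parity_contra H hconn ?_
    intro u v h
    have hd := (cay_adj u v).1 (hle h)
    rcases hd with h1 | h1 | h1 | h1
    · exact absurd (by rwa [show v = u + 1 by omega] at h) (hno1 u)
    · omega
    · exact absurd (by rw [show u = v + 1 by omega] at h; exact h.symm) (hno1 v)
    · omega

theorem stmt5 : ¬ HamDecomp (cay ({1, 2} : Set ℤ)) 2 := by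
  rintro ⟨D, hham, hdisj, hcov⟩
  have hone : ∀ u v : ℤ, (cay ({1, 2} : Set ℤ)).Adj u v →
      bb (D 0) u v + bb (D 1) u v = 1 := by
    intro u v h
    have he : s(u,v) ∈ (cay ({1, 2} : Set ℤ)).edgeSet := h
    obtain ⟨i, hi⟩ := hcov _ he
    have hi2 : i = 0 ∨ i = 1 := by
      rcases i with ⟨iv, hiv⟩
      interval_cases iv
      · exact Or.inl rfl
      · exact Or.inr rfl
    rcases hi2 with rfl | rfl
    · have ha : (D 0).Adj u v := (SimpleGraph.mem_edgeSet _).1 hi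
      have hn : ¬ (D 1).Adj u v := fun hcon =>
        Set.disjoint_left.1 (hdisj 0 1 (by decide)) hi ((SimpleGraph.mem_edgeSet _).2 hcon)
      rw [(bb_eq_one_iff _ _ _).2 ha, (bb_eq_zero_iff _ _ _).2 hn]
    · have ha : (D 1).Adj u v := (SimpleGraph.mem_edgeSet _).1 hi
      have hn : ¬ (D 0).Adj u v := fun hcon =>
        Set.disjoint_left.1 (hdisj 1 0 (by decide)) hi ((SimpleGraph.mem_edgeSet _).2 hcon)
      rw [(bb_eq_one_iff _ _ _).2 ha, (bb_eq_zero_iff _ _ _).2 hn]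
  have hsum3 : ∀ n : ℤ, cc (D 0) n + cc (D 1) n = 3 := by
    intro n
    have e1 := hone n (n+1) ((cay_adj _ _).2 (by omega))
    have e2 := hone (n-1) (n+1) ((cay_adj _ _).2 (by omega))
    have e3 := hone n (n+2) ((cay_adj _ _).2 (by omega))
    unfold cc
    omega
  obtain ⟨hle0, hconn0, hdeg0⟩ := hham 0
  obtain ⟨hle1, hconn1, hdeg1⟩ := hham 1
  have hle3_0 : ∀ n : ℤ, cc (D 0) n ≤ 3 := fun n => by have := hsum3 n; omega
  have hle3_1 : ∀ n : ℤ, cc (D 1) n ≤ 3 := fun n => by have := hsum3 n; omega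
  have h30 := hsum3 0
  by_cases h : cc (D 0) 0 % 2 = 0
  · exact even_contra (D 0) hle0 hdeg0 hconn0 hle3_0 h
  · exact even_contra (D 1) hle1 hdeg1 hconn1 hle3_1 (by omega)
end

section
/- If a and b are distinct odd positive integers with gcd(a, b) = 1, then Cay(ℤ, {±a, ±b}) admits a decomposition into 2 edge-disjoint two-way-infinite Hamilton paths. -/
/-- The zig-zag profile on one period `[0, 2(a+b))`. -/
def gfun (a b r : ℤ) : ℤ :=
  if r ≤ a + b then r * a else (a+b)*a + b - (r - (a+b) - 1)*a

/-- Index profile: `gfun a b r ≡ jfun a b r * a  (mod 2(a+b))`. -/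
def jfun (a b r : ℤ) : ℤ := if r ≤ a + b then r else 3*(a+b) - r

/-- The Hamilton double ray as a sequence `ℤ → ℤ`. -/
def pseq (a b k : ℤ) : ℤ :=
  2*(a+b) * (k / (2*(a+b))) + gfun a b (k % (2*(a+b)))

section arith
variable {a b : ℤ}

lemma pseq_eval (hab : 1 < a + b) (q r : ℤ) (h0 : 0 ≤ r) (h1 : r < 2*(a+b)) :
    pseq a b (2*(a+b)*q + r) = 2*(a+b)*q + gfun a b r := by
  unfold pseq
  rw [show 2*(a+b)*q + r = r + 2*(a+b)*q by ring]
  rw [Int.add_mul_ediv_left _ _ (by omega : 2*(a+b) ≠ 0), Int.add_mul_emod_self_left,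
      Int.ediv_eq_zero_of_lt h0 h1, Int.emod_eq_of_lt h0 h1]
  ring

lemma pseq_decomp (hab : 1 < a + b) (k : ℤ) :
    ∃ q r, k = 2*(a+b)*q + r ∧ 0 ≤ r ∧ r < 2*(a+b) := by
  refine ⟨k / (2*(a+b)), k % (2*(a+b)), ?_, Int.emod_nonneg k (by omega), Int.emod_lt_of_pos k (by omega)⟩
  exact (Int.mul_ediv_add_emod k (2*(a+b))).symm

lemma step_lt (hab : 1 < a + b) (q r : ℤ) (h0 : 0 ≤ r) (h1 : r < a + b) :
    pseq a b (2*(a+b)*q + r + 1) = pseq a b (2*(a+b)*q + r) + a := by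
  rw [show 2*(a+b)*q + r + 1 = 2*(a+b)*q + (r+1) by ring,
    pseq_eval hab q r h0 (by omega), pseq_eval hab q (r+1) (by omega) (by omega)]
  unfold gfun
  rw [if_pos (by omega : r ≤ a + b), if_pos (by omega : r + 1 ≤ a + b)]
  ring

lemma step_eq (hab : 1 < a + b) (q : ℤ) :
    pseq a b (2*(a+b)*q + (a+b) + 1) = pseq a b (2*(a+b)*q + (a+b)) + b := by
  rw [show 2*(a+b)*q + (a+b) + 1 = 2*(a+b)*q + ((a+b)+1) by ring,
    pseq_eval hab q (a+b) (by omega) (by omega), pseq_eval hab q ((a+b)+1) (by omega) (by omega)]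
  unfold gfun
  rw [if_pos (le_refl (a+b)), if_neg (by omega)]
  ring

lemma step_mid (hab : 1 < a + b) (q r : ℤ) (h0 : a + b < r) (h1 : r < 2*(a+b) - 1) :
    pseq a b (2*(a+b)*q + r + 1) = pseq a b (2*(a+b)*q + r) - a := by
  rw [show 2*(a+b)*q + r + 1 = 2*(a+b)*q + (r+1) by ring,
    pseq_eval hab q r (by omega) (by omega), pseq_eval hab q (r+1) (by omega) (by omega)]
  unfold gfun
  rw [if_neg (by omega), if_neg (by omega)]
  ring

lemma step_last (hab : 1 < a + b) (q : ℤ) :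
    pseq a b (2*(a+b)*q + (2*(a+b) - 1) + 1) = pseq a b (2*(a+b)*q + (2*(a+b)-1)) + b := by
  rw [show 2*(a+b)*q + (2*(a+b)-1) + 1 = 2*(a+b)*(q+1) + 0 by ring,
    pseq_eval hab q (2*(a+b)-1) (by omega) (by omega),
    pseq_eval hab (q+1) 0 (by omega) (by omega)]
  unfold gfun
  rw [if_pos (by omega : (0:ℤ) ≤ a + b), if_neg (by omega)]
  ring

lemma gfun_sub_jfun (ha : Odd a) (r : ℤ) :
    2*(a+b) ∣ gfun a b r - jfun a b r * a := by
  obtain ⟨m, hm⟩ := ha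
  unfold gfun jfun
  split_ifs with h
  · exact ⟨0, by ring⟩
  · exact ⟨-m, by rw [hm]; ring⟩


lemma pseq_mod (ha : Odd a) (hab : 1 < a + b) (k : ℤ) :
    2*(a+b) ∣ pseq a b k - jfun a b (k % (2*(a+b))) * a := by
  have h := gfun_sub_jfun (b := b) ha (k % (2*(a+b)))
  unfold pseq
  obtain ⟨t, ht⟩ := h
  exact ⟨k / (2*(a+b)) + t, by rw [show gfun a b (k % (2*(a+b))) = jfun a b (k % (2*(a+b))) * a + 2*(a+b)*t by omega]; ring⟩

lemma dvd_cancel_a (hu : ∃ c, 2*(a+b) ∣ c*a - 1) {x : ℤ} (h : 2*(a+b) ∣ x*a) :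
    2*(a+b) ∣ x := by
  obtain ⟨c, hc⟩ := hu
  have : x = c*(x*a) - x*(c*a - 1) := by ring
  rw [this]
  exact dvd_sub (h.mul_left c) (hc.mul_left x)

lemma jfun_bounds (hab : 1 < a + b) {r : ℤ} (h0 : 0 ≤ r) (h1 : r < 2*(a+b)) :
    0 ≤ jfun a b r ∧ jfun a b r < 2*(a+b) := by
  unfold jfun; split_ifs <;> omega

lemma jfun_inj (hab : 1 < a + b) {r r' : ℤ} (h0 : 0 ≤ r) (h1 : r < 2*(a+b))
    (h0' : 0 ≤ r') (h1' : r' < 2*(a+b)) (h : jfun a b r = jfun a b r') : r = r' := by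
  unfold jfun at h; split_ifs at h <;> omega

lemma dvd_ja_sub (ha : Odd a) (hab : 1 < a + b) (hu : ∃ c, 2*(a+b) ∣ c*a - 1)
    {k k' : ℤ} (h : pseq a b k = pseq a b k') :
    2*(a+b) ∣ jfun a b (k % (2*(a+b))) - jfun a b (k' % (2*(a+b))) := by
  apply dvd_cancel_a hu
  have h1 := pseq_mod (b := b) ha hab k
  have h2 := pseq_mod (b := b) ha hab k'
  have : (jfun a b (k % (2*(a+b))) - jfun a b (k' % (2*(a+b))))*a
      = (pseq a b k' - jfun a b (k' % (2*(a+b))) * a)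
        - (pseq a b k - jfun a b (k % (2*(a+b))) * a) := by rw [h]; ring
  rw [this]
  exact dvd_sub h2 h1

lemma pseq_inj (ha : Odd a) (hab : 1 < a + b) (hu : ∃ c, 2*(a+b) ∣ c*a - 1) :
    Function.Injective (pseq a b) := by
  intro k k' h
  have hd := dvd_ja_sub ha hab hu h
  have hr0 := Int.emod_nonneg k (by omega : 2*(a+b) ≠ 0)
  have hr1 := Int.emod_lt_of_pos k (by omega : 0 < 2*(a+b))
  have hr0' := Int.emod_nonneg k' (by omega : 2*(a+b) ≠ 0)
  have hr1' := Int.emod_lt_of_pos k' (by omega : 0 < 2*(a+b))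
  have hb1 := jfun_bounds (b := b) hab hr0 hr1
  have hb2 := jfun_bounds (b := b) hab hr0' hr1'
  have hj : jfun a b (k % (2*(a+b))) = jfun a b (k' % (2*(a+b))) := by
    have := Int.eq_zero_of_abs_lt_dvd hd (by rw [abs_lt]; omega)
    omega
  have hr : k % (2*(a+b)) = k' % (2*(a+b)) := jfun_inj hab hr0 hr1 hr0' hr1' hj
  have e1 := Int.mul_ediv_add_emod k (2*(a+b))
  have e2 := Int.mul_ediv_add_emod k' (2*(a+b))
  unfold pseq at h
  rw [hr] at h e1
  have : k / (2*(a+b)) = k' / (2*(a+b)) := by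
    have h2 : 2*(a+b) * (k / (2*(a+b))) = 2*(a+b) * (k' / (2*(a+b))) := by omega
    exact mul_left_cancel₀ (by omega : (2:ℤ)*(a+b) ≠ 0) h2
  omega

lemma exists_j (hab : 1 < a + b) (hu : ∃ c, 2*(a+b) ∣ c*a - 1) (v : ℤ) :
    ∃ j, 0 ≤ j ∧ j < 2*(a+b) ∧ 2*(a+b) ∣ v - j*a := by
  obtain ⟨c, hc⟩ := hu
  refine ⟨(c*v) % (2*(a+b)), Int.emod_nonneg _ (by omega), Int.emod_lt_of_pos _ (by omega), ?_⟩
  have : v - ((c*v) % (2*(a+b)))*a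
      = -(v*(c*a-1)) + 2*(a+b)*(((c*v)/(2*(a+b)))*a) := by
    rw [Int.emod_def]; ring
  rw [this]
  exact dvd_add ((hc.mul_left v).neg_right) ⟨((c*v)/(2*(a+b)))*a, rfl⟩

lemma exists_k (hab : 1 < a + b) {r : ℤ} (h0 : 0 ≤ r) (h1 : r < 2*(a+b)) (v : ℤ)
    (hd : 2*(a+b) ∣ v - gfun a b r) :
    ∃ q, pseq a b (2*(a+b)*q + r) = v := by
  refine ⟨(v - gfun a b r)/(2*(a+b)), ?_⟩
  rw [pseq_eval hab _ r h0 h1, Int.mul_ediv_cancel' hd]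
  ring

lemma exists_k_mod (ha : Odd a) (hab : 1 < a + b) {r : ℤ} (h0 : 0 ≤ r) (h1 : r < 2*(a+b)) (v : ℤ)
    (hd : 2*(a+b) ∣ v - jfun a b r * a) :
    ∃ q, pseq a b (2*(a+b)*q + r) = v := by
  refine exists_k hab h0 h1 v ?_
  have h2 := gfun_sub_jfun (b := b) ha r
  have : v - gfun a b r = (v - jfun a b r * a) - (gfun a b r - jfun a b r * a) := by ring
  rw [this]
  exact dvd_sub hd h2

lemma pseq_surj (ha : Odd a) (hab : 1 < a + b) (hu : ∃ c, 2*(a+b) ∣ c*a - 1) :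
    Function.Surjective (pseq a b) := by
  intro v
  obtain ⟨j, hj0, hj1, hjd⟩ := exists_j hab hu v
  set r := if j ≤ a + b then j else 3*(a+b) - j with hrdef
  have hr0 : 0 ≤ r := by rw [hrdef]; split_ifs <;> omega
  have hr1 : r < 2*(a+b) := by rw [hrdef]; split_ifs <;> omega
  have hjf : jfun a b r = j := by
    rw [hrdef]; unfold jfun; split_ifs <;> omega
  obtain ⟨q, hq⟩ := exists_k_mod ha hab hr0 hr1 v (by rw [hjf]; exact hjd)
  exact ⟨_, hq⟩

end arith

/-- The spanning subgraph traced by a two-way-infinite sequence `f`. -/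
def pgraph (f : ℤ → ℤ) : SimpleGraph ℤ where
  Adj u v := u ≠ v ∧ ∃ k, (f k = u ∧ f (k+1) = v) ∨ (f k = v ∧ f (k+1) = u)
  symm := by
    constructor
    rintro u v ⟨h, k, hk⟩
    exact ⟨h.symm, k, by tauto⟩
  loopless := by constructor; rintro v ⟨h, -⟩; exact h rfl

lemma pgraph_adj {f : ℤ → ℤ} {u v : ℤ} :
    (pgraph f).Adj u v ↔ u ≠ v ∧ ∃ k, (f k = u ∧ f (k+1) = v) ∨ (f k = v ∧ f (k+1) = u) :=
  Iff.rfl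

section graph
variable {f : ℤ → ℤ}

lemma pgraph_nbhd (hinj : Function.Injective f) (i : ℤ) :
    (pgraph f).neighborSet (f i) = {f (i-1), f (i+1)} := by
  ext v
  simp only [SimpleGraph.mem_neighborSet, pgraph_adj, Set.mem_insert_iff, Set.mem_singleton_iff]
  constructor
  · rintro ⟨hne, k, ⟨h1, h2⟩ | ⟨h1, h2⟩⟩
    · have : k = i := hinj h1
      subst this; right; exact h2.symm
    · have : k + 1 = i := hinj h2
      left; rw [← h1, show i - 1 = k by omega]
  · rintro (rfl | rfl)
    · refine ⟨fun h => ?_, i - 1, Or.inr ⟨rfl, by rw [show i - 1 + 1 = i by ring]⟩⟩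
      have := hinj h; omega
    · refine ⟨fun h => ?_, i, Or.inl ⟨rfl, rfl⟩⟩
      have := hinj h; omega

lemma pgraph_degree (hbij : Function.Bijective f) (v : ℤ) :
    ((pgraph f).neighborSet v).ncard = 2 := by
  obtain ⟨i, rfl⟩ := hbij.surjective v
  rw [pgraph_nbhd hbij.injective i]
  exact Set.ncard_pair (fun h => by have := hbij.injective h; omega)

lemma pgraph_reach (hinj : Function.Injective f) (i : ℤ) (m : ℕ) :
    (pgraph f).Reachable (f i) (f (i + m)) := by
  induction m with
  | zero => simpa using SimpleGraph.Reachable.refl (f i)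
  | succ d ih =>
      refine ih.trans (SimpleGraph.Adj.reachable ?_)
      refine ⟨fun h => by have := hinj h; omega, i + d, Or.inl ⟨rfl, ?_⟩⟩
      congr 1
      push_cast
      ring

lemma pgraph_connected (hbij : Function.Bijective f) : (pgraph f).Connected := by
  rw [SimpleGraph.connected_iff]
  refine ⟨fun u v => ?_, ⟨0⟩⟩
  obtain ⟨i, rfl⟩ := hbij.surjective u
  obtain ⟨j, rfl⟩ := hbij.surjective v
  rcases le_total i j with h | h
  · have : j = i + ((j - i).toNat : ℤ) := by omega
    rw [this]; exact pgraph_reach hbij.injective i _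
  · have : i = j + ((i - j).toNat : ℤ) := by omega
    rw [this]; exact (pgraph_reach hbij.injective j _).symm

end graph

section charact
variable {a b : ℤ}

lemma najn (ha : Odd a) : 2*(a+b) ∣ (a+b)*a - (a+b) := by
  obtain ⟨m, hm⟩ := ha
  exact ⟨m, by rw [hm]; ring⟩

lemma emod_eval (hab : 1 < a + b) {q r : ℤ} (h0 : 0 ≤ r) (h1 : r < 2*(a+b)) :
    (2*(a+b)*q + r) % (2*(a+b)) = r := by
  rw [show 2*(a+b)*q + r = r + 2*(a+b)*q by ring, Int.add_mul_emod_self_left,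
    Int.emod_eq_of_lt h0 h1]

lemma pseq_mod' (ha : Odd a) (hab : 1 < a + b) {q r : ℤ} (h0 : 0 ≤ r) (h1 : r < 2*(a+b)) :
    2*(a+b) ∣ pseq a b (2*(a+b)*q + r) - jfun a b r * a := by
  have := pseq_mod (b := b) ha hab (2*(a+b)*q + r)
  rwa [emod_eval hab h0 h1] at this

lemma j_eq (hu : ∃ c, 2*(a+b) ∣ c*a - 1) (hab : 1 < a + b) {u j j' : ℤ}
    (h1 : 2*(a+b) ∣ u - j*a) (h2 : 2*(a+b) ∣ u - j'*a)
    (b1 : 0 ≤ j) (b2 : j < 2*(a+b)) (b3 : 0 ≤ j') (b4 : j' < 2*(a+b)) : j = j' := by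
  have hd : 2*(a+b) ∣ (j' - j)*a := by
    have : (j' - j)*a = (u - j*a) - (u - j'*a) := by ring
    rw [this]; exact dvd_sub h1 h2
  have := dvd_cancel_a hu hd
  have := Int.eq_zero_of_abs_lt_dvd this (by rw [abs_lt]; omega)
  omega

lemma conv_n (ha : Odd a) {u : ℤ} :
    (2*(a+b) ∣ u - (a+b)) ↔ (2*(a+b) ∣ u - (a+b)*a) := by
  have h := najn (b := b) ha
  constructor
  · intro hc
    have : u - (a+b)*a = (u - (a+b)) - ((a+b)*a - (a+b)) := by ring
    rw [this]; exact dvd_sub hc h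
  · intro hc
    have : u - (a+b) = (u - (a+b)*a) + ((a+b)*a - (a+b)) := by ring
    rw [this]; exact dvd_add hc h

lemma conv_pa {u : ℤ} :
    (2*(a+b) ∣ u + a) ↔ (2*(a+b) ∣ u - (2*(a+b)-1)*a) := by
  constructor
  · intro hc
    have : u - (2*(a+b)-1)*a = (u + a) + 2*(a+b)*(-a) := by ring
    rw [this]; exact dvd_add hc ⟨-a, rfl⟩
  · intro hc
    have : u + a = (u - (2*(a+b)-1)*a) + 2*(a+b)*a := by ring
    rw [this]; exact dvd_add hc ⟨a, rfl⟩

lemma conv_na (ha : Odd a) {u : ℤ} :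
    (2*(a+b) ∣ u - (2*a+b)) ↔ (2*(a+b) ∣ u - ((a+b)+1)*a) := by
  have h := najn (b := b) ha
  constructor
  · intro hc
    have : u - ((a+b)+1)*a = (u - (2*a+b)) - ((a+b)*a - (a+b)) := by ring
    rw [this]; exact dvd_sub hc h
  · intro hc
    have : u - (2*a+b) = (u - ((a+b)+1)*a) + ((a+b)*a - (a+b)) := by ring
    rw [this]; exact dvd_add hc h

lemma adjA (ha : Odd a) (ha0 : 0 < a) (hb0 : 0 < b) (hne : a ≠ b)
    (hu : ∃ c, 2*(a+b) ∣ c*a - 1) (u : ℤ) :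
    (pgraph (pseq a b)).Adj u (u + a) ↔
      ¬(2*(a+b) ∣ u - (a+b)) ∧ ¬(2*(a+b) ∣ u + a) := by
  have hab : 1 < a + b := by omega
  constructor
  · rintro ⟨hne', k, hk⟩
    obtain ⟨q, r, hkeq, hr0, hr1⟩ := pseq_decomp hab k
    rw [hkeq] at hk
    rcases (by omega : r < a + b ∨ r = a + b ∨ (a + b < r ∧ r < 2*(a+b) - 1) ∨ r = 2*(a+b) - 1)
      with hc | hc | hc | hc
    · have hstep := step_lt hab q r hr0 hc
      rcases hk with ⟨h1, h2⟩ | ⟨h1, h2⟩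
      swap
      · omega
      have hd := pseq_mod' (q := q) ha hab hr0 hr1
      have hjr : jfun a b r = r := by unfold jfun; rw [if_pos (by omega)]
      rw [hjr, h1] at hd
      constructor
      · intro hcon
        have := j_eq hu hab hd ((conv_n ha).mp hcon) hr0 (by omega) (by omega) (by omega)
        omega
      · intro hcon
        have := j_eq hu hab hd (conv_pa.mp hcon) hr0 (by omega) (by omega) (by omega)
        omega
    · subst hc
      have hstep := step_eq hab q
      rcases hk with ⟨h1, h2⟩ | ⟨h1, h2⟩ <;> omega
    · have hstep := step_mid hab q r hc.1 hc.2
      rcases hk with ⟨h1, h2⟩ | ⟨h1, h2⟩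
      · omega
      have hd := pseq_mod' (q := q) ha hab hr0 hr1
      have hjr : jfun a b r = 3*(a+b) - r := by unfold jfun; rw [if_neg (by omega)]
      rw [hjr, h1] at hd
      have hd' : 2*(a+b) ∣ u - (3*(a+b) - r - 1)*a := by
        have : u - (3*(a+b) - r - 1)*a = (u + a) - (3*(a+b) - r)*a := by ring
        rw [this]; exact hd
      constructor
      · intro hcon
        have := j_eq hu hab hd' ((conv_n ha).mp hcon) (by omega) (by omega) (by omega) (by omega)
        omega
      · intro hcon
        have := j_eq hu hab hd' (conv_pa.mp hcon) (by omega) (by omega) (by omega) (by omega)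
        omega
    · subst hc
      have hstep := step_last hab q
      rcases hk with ⟨h1, h2⟩ | ⟨h1, h2⟩ <;> omega
  · rintro ⟨hc1, hc2⟩
    obtain ⟨j, hj0, hj1, hjd⟩ := exists_j hab hu u
    have hjn : j ≠ a + b := by
      intro h; subst h
      exact hc1 ((conv_n ha).mpr hjd)
    have hjl : j ≠ 2*(a+b) - 1 := by
      intro h; subst h
      exact hc2 (conv_pa.mpr hjd)
    rcases (by omega : j ≤ a + b - 1 ∨ ((a+b)+1 ≤ j ∧ j ≤ 2*(a+b) - 2)) with hc | hc
    · -- ascending step at u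
      obtain ⟨q, hq⟩ := exists_k_mod ha hab (r := j) hj0 (by omega) u
        (by rw [show jfun a b j = j by unfold jfun; rw [if_pos (by omega)]]; exact hjd)
      refine ⟨by omega, 2*(a+b)*q + j, Or.inl ⟨hq, ?_⟩⟩
      rw [step_lt hab q j hj0 (by omega), hq]
    · -- descending step ending at u
      set r := 3*(a+b) - 1 - j with hrdef
      obtain ⟨q, hq⟩ := exists_k_mod ha hab (r := r + 1) (by omega) (by omega) u
        (by rw [show jfun a b (r+1) = j by unfold jfun; rw [if_neg (by omega)]; omega]; exact hjd)
      have hstep := step_mid hab q r (by omega) (by omega)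
      refine ⟨by omega, 2*(a+b)*q + r, Or.inr ⟨?_, ?_⟩⟩
      · have : pseq a b (2*(a+b)*q + (r+1)) = u := hq
        rw [show 2*(a+b)*q + (r+1) = 2*(a+b)*q + r + 1 by ring] at this
        omega
      · rw [show 2*(a+b)*q + r + 1 = 2*(a+b)*q + (r+1) by ring]
        exact hq

lemma adjB (ha : Odd a) (ha0 : 0 < a) (hb0 : 0 < b) (hne : a ≠ b)
    (hu : ∃ c, 2*(a+b) ∣ c*a - 1) (u : ℤ) :
    (pgraph (pseq a b)).Adj u (u + b) ↔
      (2*(a+b) ∣ u - (a+b)) ∨ (2*(a+b) ∣ u - (2*a+b)) := by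
  have hab : 1 < a + b := by omega
  constructor
  · rintro ⟨hne', k, hk⟩
    obtain ⟨q, r, hkeq, hr0, hr1⟩ := pseq_decomp hab k
    rw [hkeq] at hk
    rcases (by omega : r < a + b ∨ r = a + b ∨ (a + b < r ∧ r < 2*(a+b) - 1) ∨ r = 2*(a+b) - 1)
      with hc | hc | hc | hc
    · have hstep := step_lt hab q r hr0 hc
      rcases hk with ⟨h1, h2⟩ | ⟨h1, h2⟩ <;> omega
    · subst hc
      have hstep := step_eq hab q
      rcases hk with ⟨h1, h2⟩ | ⟨h1, h2⟩
      swap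
      · omega
      have hd := pseq_mod' (q := q) ha hab hr0 hr1
      have hjr : jfun a b (a+b) = a+b := by unfold jfun; rw [if_pos (le_refl _)]
      rw [hjr, h1] at hd
      exact Or.inl ((conv_n ha).mpr hd)
    · have hstep := step_mid hab q r hc.1 hc.2
      rcases hk with ⟨h1, h2⟩ | ⟨h1, h2⟩ <;> omega
    · subst hc
      have hstep := step_last hab q
      rcases hk with ⟨h1, h2⟩ | ⟨h1, h2⟩
      swap
      · omega
      have hd := pseq_mod' (q := q) ha hab hr0 hr1
      have hjr : jfun a b (2*(a+b)-1) = (a+b)+1 := by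
        unfold jfun; rw [if_neg (by omega)]; ring
      rw [hjr, h1] at hd
      exact Or.inr ((conv_na ha).mpr hd)
  · rintro (hc | hc)
    · obtain ⟨q, hq⟩ := exists_k_mod ha hab (r := a+b) (by omega) (by omega) u
        (by rw [show jfun a b (a+b) = a+b by unfold jfun; rw [if_pos (le_refl _)]]
            exact (conv_n ha).mp hc)
      refine ⟨by omega, 2*(a+b)*q + (a+b), Or.inl ⟨hq, ?_⟩⟩
      rw [step_eq hab q, hq]
    · obtain ⟨q, hq⟩ := exists_k_mod ha hab (r := 2*(a+b)-1) (by omega) (by omega) u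
        (by rw [show jfun a b (2*(a+b)-1) = (a+b)+1 by
              unfold jfun; rw [if_neg (by omega)]; ring]
            exact (conv_na ha).mp hc)
      refine ⟨by omega, 2*(a+b)*q + (2*(a+b)-1), Or.inl ⟨hq, ?_⟩⟩
      rw [step_last hab q, hq]

end charact

section shape
variable {a b : ℤ}

lemma pgraph_shape (hab : 1 < a + b) {u v : ℤ}
    (h : (pgraph (pseq a b)).Adj u v) :
    v = u + a ∨ u = v + a ∨ v = u + b ∨ u = v + b := by
  obtain ⟨hne, k, hk⟩ := h
  obtain ⟨q, r, hkeq, hr0, hr1⟩ := pseq_decomp hab k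
  rw [hkeq] at hk
  rcases (by omega : r < a + b ∨ r = a + b ∨ (a + b < r ∧ r < 2*(a+b) - 1) ∨ r = 2*(a+b) - 1)
    with hc | hc | hc | hc
  · have hstep := step_lt hab q r hr0 hc
    rcases hk with ⟨h1, h2⟩ | ⟨h1, h2⟩ <;> omega
  · subst hc
    have hstep := step_eq hab q
    rcases hk with ⟨h1, h2⟩ | ⟨h1, h2⟩ <;> omega
  · have hstep := step_mid hab q r hc.1 hc.2
    rcases hk with ⟨h1, h2⟩ | ⟨h1, h2⟩ <;> omega
  · subst hc
    have hstep := step_last hab q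
    rcases hk with ⟨h1, h2⟩ | ⟨h1, h2⟩ <;> omega

end shape

theorem stmt6 (a b : ℤ) (ha : 0 < a) (hb : 0 < b) (hab : a ≠ b)
    (haodd : Odd a) (hbodd : Odd b) (hcop : Int.gcd a b = 1) :
    HamDecomp (cay ({a, b} : Set ℤ)) 2 := by
  have hab1 : 1 < a + b := by omega
  have hba1 : 1 < b + a := by omega
  have cop : IsCoprime a b := Int.isCoprime_iff_gcd_eq_one.mpr hcop
  obtain ⟨ma, hma⟩ := haodd
  obtain ⟨mb, hmb⟩ := hbodd
  have haodd' : Odd a := ⟨ma, hma⟩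
  have hbodd' : Odd b := ⟨mb, hmb⟩
  have hu_a : ∃ c, 2*(a+b) ∣ c*a - 1 := by
    have co2 : IsCoprime a 2 := ⟨1, -ma, by rw [hma]; ring⟩
    have c2b : IsCoprime a (2*b) := co2.mul_right cop
    have cL : IsCoprime a (2*(a+b)) := by
      have := c2b.add_mul_left_right 2
      rwa [show 2*b + a*2 = 2*(a+b) by ring] at this
    obtain ⟨u, v, huv⟩ := cL
    exact ⟨u, ⟨-v, by linear_combination huv⟩⟩
  have hu_b : ∃ c, 2*(b+a) ∣ c*b - 1 := by
    have co2 : IsCoprime b 2 := ⟨1, -mb, by rw [hmb]; ring⟩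
    have c2a : IsCoprime b (2*a) := co2.mul_right cop.symm
    have cL : IsCoprime b (2*(b+a)) := by
      have := c2a.add_mul_left_right 2
      rwa [show 2*a + b*2 = 2*(b+a) by ring] at this
    obtain ⟨u, v, huv⟩ := cL
    exact ⟨u, ⟨-v, by linear_combination huv⟩⟩
  have bij0 : Function.Bijective (pseq a b) :=
    ⟨pseq_inj haodd' hab1 hu_a, pseq_surj haodd' hab1 hu_a⟩
  have bij1 : Function.Bijective (pseq b a) :=
    ⟨pseq_inj hbodd' hba1 hu_b, pseq_surj hbodd' hba1 hu_b⟩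
  have adjA0 := adjA haodd' ha hb hab hu_a
  have adjB0 := adjB haodd' ha hb hab hu_a
  have adjA1 : ∀ u, (pgraph (pseq b a)).Adj u (u + b) ↔
      ¬(2*(a+b) ∣ u - (a+b)) ∧ ¬(2*(a+b) ∣ u + b) := by
    intro u
    have h := adjA hbodd' hb ha (Ne.symm hab) hu_b u
    rwa [show b + a = a + b by ring] at h
  have adjB1 : ∀ u, (pgraph (pseq b a)).Adj u (u + a) ↔
      (2*(a+b) ∣ u - (a+b)) ∨ (2*(a+b) ∣ u + a) := by
    intro u
    have h := adjB hbodd' hb ha (Ne.symm hab) hu_b u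
    rw [show b + a = a + b by ring] at h
    rw [h]
    constructor
    · rintro (h' | h')
      · exact Or.inl h'
      · refine Or.inr ?_
        have e : u + a = (u - (2*b+a)) + 2*(a+b)*1 := by ring
        rw [e]; exact dvd_add h' ⟨1, rfl⟩
    · rintro (h' | h')
      · exact Or.inl h'
      · refine Or.inr ?_
        have e : u - (2*b+a) = (u + a) - 2*(a+b)*1 := by ring
        rw [e]; exact dvd_sub h' ⟨1, rfl⟩
  have adjB0' : ∀ u, (pgraph (pseq a b)).Adj u (u + b) ↔
      (2*(a+b) ∣ u - (a+b)) ∨ (2*(a+b) ∣ u + b) := by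
    intro u
    rw [adjB0 u]
    constructor
    · rintro (h' | h')
      · exact Or.inl h'
      · refine Or.inr ?_
        have e : u + b = (u - (2*a+b)) + 2*(a+b)*1 := by ring
        rw [e]; exact dvd_add h' ⟨1, rfl⟩
    · rintro (h' | h')
      · exact Or.inl h'
      · refine Or.inr ?_
        have e : u - (2*a+b) = (u + b) - 2*(a+b)*1 := by ring
        rw [e]; exact dvd_sub h' ⟨1, rfl⟩
  have shape0 : ∀ {u v : ℤ}, (pgraph (pseq a b)).Adj u v →
      (v = u + a ∨ u = v + a ∨ v = u + b ∨ u = v + b) :=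
    fun h => pgraph_shape hab1 h
  have shape1 : ∀ {u v : ℤ}, (pgraph (pseq b a)).Adj u v →
      (v = u + a ∨ u = v + a ∨ v = u + b ∨ u = v + b) := by
    intro u v h
    have := pgraph_shape hba1 h
    tauto
  have le0 : pgraph (pseq a b) ≤ cay ({a,b} : Set ℤ) := by
    intro u v h
    refine ⟨h.1, ?_⟩
    have hs := shape0 h
    simp only [Set.mem_insert_iff, Set.mem_singleton_iff]
    omega
  have le1 : pgraph (pseq b a) ≤ cay ({a,b} : Set ℤ) := by
    intro u v h
    refine ⟨h.1, ?_⟩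
    have hs := shape1 h
    simp only [Set.mem_insert_iff, Set.mem_singleton_iff]
    omega
  have disj : Disjoint (pgraph (pseq a b)).edgeSet (pgraph (pseq b a)).edgeSet := by
    rw [Set.disjoint_left]
    intro e he0 he1
    induction e using Sym2.ind with
    | _ u v =>
      rw [SimpleGraph.mem_edgeSet] at he0 he1
      rcases shape0 he0 with h | h | h | h
      · subst h
        have p0 := (adjA0 u).mp he0
        have p1 := (adjB1 u).mp he1
        tauto
      · subst h
        have p0 := (adjA0 v).mp he0.symm
        have p1 := (adjB1 v).mp he1.symm
        tauto
      · subst h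
        have p0 := (adjB0' u).mp he0
        have p1 := (adjA1 u).mp he1
        tauto
      · subst h
        have p0 := (adjB0' v).mp he0.symm
        have p1 := (adjA1 v).mp he1.symm
        tauto
  refine ⟨![pgraph (pseq a b), pgraph (pseq b a)], ?_, ?_, ?_⟩
  · intro i
    fin_cases i
    · exact ⟨le0, pgraph_connected bij0, pgraph_degree bij0⟩
    · exact ⟨le1, pgraph_connected bij1, pgraph_degree bij1⟩
  · intro i j hij
    fin_cases i <;> fin_cases j
    · exact absurd rfl hij
    · simpa using disj
    · simpa using disj.symm
    · exact absurd rfl hij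
  · intro e he
    induction e using Sym2.ind with
    | _ u v =>
      rw [SimpleGraph.mem_edgeSet] at he
      obtain ⟨hne, hmem⟩ := he
      simp only [Set.mem_insert_iff, Set.mem_singleton_iff] at hmem
      rcases (by omega : u = v + a ∨ u = v + b ∨ v = u + a ∨ v = u + b) with h | h | h | h
      · subst h
        by_cases hP : (2*(a+b) ∣ v - (a+b)) ∨ (2*(a+b) ∣ v + a)
        · exact ⟨1, by simpa [SimpleGraph.mem_edgeSet] using ((adjB1 v).mpr hP).symm⟩
        · push_neg at hP
          exact ⟨0, by simpa [SimpleGraph.mem_edgeSet] using ((adjA0 v).mpr hP).symm⟩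
      · subst h
        by_cases hP : (2*(a+b) ∣ v - (a+b)) ∨ (2*(a+b) ∣ v + b)
        · exact ⟨0, by simpa [SimpleGraph.mem_edgeSet] using ((adjB0' v).mpr hP).symm⟩
        · push_neg at hP
          exact ⟨1, by simpa [SimpleGraph.mem_edgeSet] using ((adjA1 v).mpr hP).symm⟩
      · subst h
        by_cases hP : (2*(a+b) ∣ u - (a+b)) ∨ (2*(a+b) ∣ u + a)
        · exact ⟨1, by simpa [SimpleGraph.mem_edgeSet] using (adjB1 u).mpr hP⟩
        · push_neg at hP
          exact ⟨0, by simpa [SimpleGraph.mem_edgeSet] using (adjA0 u).mpr hP⟩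
      · subst h
        by_cases hP : (2*(a+b) ∣ u - (a+b)) ∨ (2*(a+b) ∣ u + b)
        · exact ⟨0, by simpa [SimpleGraph.mem_edgeSet] using (adjB0' u).mpr hP⟩
        · push_neg at hP
          exact ⟨1, by simpa [SimpleGraph.mem_edgeSet] using (adjA1 u).mpr hP⟩
end

section
/- The graph Cay(ℤ, {±1, ±2, ±4}) admits a decomposition into 3 edge-disjoint two-way-infinite Hamilton paths; explicitly, if H₁ is the union over i ∈ ℤ of the translates by 3i of the path [0, 1, -1, 3], then {H₁, H₁+1, H₁+2} is such a decomposition. -/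
/-- Translate of a graph on ℤ by `t`. -/
def shiftGraph (H : SimpleGraph ℤ) (t : ℤ) : SimpleGraph ℤ where
  Adj u v := H.Adj (u - t) (v - t)
  symm := ⟨fun _ _ h => H.adj_symm h⟩
  loopless := ⟨fun _ h => H.irrefl h⟩

/-- The path graph determined by a list of vertices. -/
def listGraph (l : List ℤ) : SimpleGraph ℤ :=
  SimpleGraph.fromEdgeSet {e | ∃ i : ℕ, i + 1 < l.length ∧ e = s(l.getD i 0, l.getD (i+1) 0)}


def Q (u v : ℤ) : Prop :=
  (v - u = 1 ∧ u % 3 = 0) ∨ (u - v = 1 ∧ v % 3 = 0) ∨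
  (u - v = 2 ∧ v % 3 = 2) ∨ (v - u = 2 ∧ u % 3 = 2) ∨
  (v - u = 4 ∧ u % 3 = 2) ∨ (u - v = 4 ∧ v % 3 = 2)

lemma listGraph_adj (u v : ℤ) : (listGraph [0,1,-1,3]).Adj u v ↔
    (u=0∧v=1)∨(u=1∧v=0)∨(u=1∧v=-1)∨(u=-1∧v=1)∨(u=-1∧v=3)∨(u=3∧v=-1) := by
  simp only [listGraph, SimpleGraph.fromEdgeSet_adj, Set.mem_setOf_eq]
  constructor
  · rintro ⟨⟨i, hi, he⟩, hne⟩
    have hi3 : i < 3 := by simp at hi; omega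
    interval_cases i <;> simp_all [Sym2.eq_iff] <;> tauto
  · rintro (⟨rfl,rfl⟩|⟨rfl,rfl⟩|⟨rfl,rfl⟩|⟨rfl,rfl⟩|⟨rfl,rfl⟩|⟨rfl,rfl⟩)
    exacts [⟨⟨0, by norm_num⟩, by norm_num⟩, ⟨⟨0, by norm_num, by simp [Sym2.eq_iff]⟩, by norm_num⟩,
      ⟨⟨1, by norm_num⟩, by norm_num⟩, ⟨⟨1, by norm_num, by simp [Sym2.eq_iff]⟩, by norm_num⟩,
      ⟨⟨2, by norm_num⟩, by norm_num⟩, ⟨⟨2, by norm_num, by simp [Sym2.eq_iff]⟩, by norm_num⟩]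

lemma H1_adj (u v : ℤ) :
    (⨆ i : ℤ, shiftGraph (listGraph [0, 1, -1, 3]) (3 * i)).Adj u v ↔ Q u v := by
  rw [SimpleGraph.iSup_adj]
  simp only [shiftGraph, listGraph_adj]
  constructor
  · rintro ⟨i, h⟩
    unfold Q; omega
  · intro h
    rcases h with h|h|h|h|h|h
    exacts [⟨u/3, by omega⟩, ⟨v/3, by omega⟩, ⟨v/3+1, by omega⟩, ⟨u/3+1, by omega⟩,
      ⟨u/3+1, by omega⟩, ⟨v/3+1, by omega⟩]

abbrev G1 (t : ℤ) : SimpleGraph ℤ :=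
  shiftGraph (⨆ i : ℤ, shiftGraph (listGraph [0, 1, -1, 3]) (3 * i)) t

lemma G1_adj (t u v : ℤ) : (G1 t).Adj u v ↔ Q (u - t) (v - t) := by
  show (⨆ i : ℤ, shiftGraph (listGraph [0, 1, -1, 3]) (3 * i)).Adj (u-t) (v-t) ↔ _
  exact H1_adj _ _

lemma G1_deg (t v : ℤ) : ((G1 t).neighborSet v).ncard = 2 := by
  have h3 : (v - t) % 3 = 0 ∨ (v - t) % 3 = 1 ∨ (v - t) % 3 = 2 := by omega
  rcases h3 with h | h | h
  · have : (G1 t).neighborSet v = {v + 1, v - 4} := by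
      ext w; simp only [SimpleGraph.mem_neighborSet, G1_adj, Q, Set.mem_insert_iff,
        Set.mem_singleton_iff]; omega
    rw [this]; exact Set.ncard_pair (by omega)
  · have : (G1 t).neighborSet v = {v - 1, v - 2} := by
      ext w; simp only [SimpleGraph.mem_neighborSet, G1_adj, Q, Set.mem_insert_iff,
        Set.mem_singleton_iff]; omega
    rw [this]; exact Set.ncard_pair (by omega)
  · have : (G1 t).neighborSet v = {v + 2, v + 4} := by
      ext w; simp only [SimpleGraph.mem_neighborSet, G1_adj, Q, Set.mem_insert_iff,
        Set.mem_singleton_iff]; omega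
    rw [this]; exact Set.ncard_pair (by omega)

lemma G1_step (t i : ℤ) : (G1 t).Reachable (3*i + t) (3*(i+1) + t) := by
  have a1 : (G1 t).Adj (3*i + t) (3*i + 1 + t) := by rw [G1_adj]; unfold Q; omega
  have a2 : (G1 t).Adj (3*i + 1 + t) (3*i - 1 + t) := by rw [G1_adj]; unfold Q; omega
  have a3 : (G1 t).Adj (3*i - 1 + t) (3*(i+1) + t) := by rw [G1_adj]; unfold Q; omega
  exact (a1.reachable.trans a2.reachable).trans a3.reachable

lemma G1_reach0 (t : ℤ) : ∀ i : ℤ, (G1 t).Reachable t (3*i + t) := by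
  intro i
  induction i using Int.induction_on with
  | zero => simpa using SimpleGraph.Reachable.refl _
  | succ k ih => exact ih.trans (by simpa using G1_step t k)
  | pred k ih => exact ih.trans (by simpa using (G1_step t (-k-1)).symm)

lemma G1_conn (t : ℤ) : (G1 t).Connected := by
  rw [SimpleGraph.connected_iff]
  refine ⟨fun u v => ?_, ⟨0⟩⟩
  have key : ∀ w : ℤ, (G1 t).Reachable t w := by
    intro w
    have h3 : (w - t) % 3 = 0 ∨ (w - t) % 3 = 1 ∨ (w - t) % 3 = 2 := by omega
    rcases h3 with h | h | h
    · have h0 := G1_reach0 t ((w - t)/3)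
      rwa [show 3*((w - t)/3) + t = w by omega] at h0
    · have := G1_reach0 t ((w - t - 1)/3)
      have a : (G1 t).Adj (3*((w-t-1)/3) + t) w := by rw [G1_adj]; unfold Q; omega
      exact this.trans a.reachable
    · have := G1_reach0 t ((w - t + 4)/3)
      have a : (G1 t).Adj (3*((w-t+4)/3) + t) w := by rw [G1_adj]; unfold Q; omega
      exact this.trans a.reachable
  exact (key u).symm.trans (key v)

lemma G1_le (t : ℤ) : G1 t ≤ cay ({1, 2, 4} : Set ℤ) := by
  intro u v h
  rw [G1_adj] at h
  unfold Q at h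
  refine ⟨by omega, ?_⟩
  simp only [Set.mem_insert_iff, Set.mem_singleton_iff]
  omega

lemma G1_disj (t t' : ℤ) (h0 : 0 ≤ t) (h2 : t < 3) (h0' : 0 ≤ t') (h2' : t' < 3)
    (hne : t ≠ t') : Disjoint (G1 t).edgeSet (G1 t').edgeSet := by
  rw [Set.disjoint_left]
  intro e he he'
  induction e with
  | h u v =>
    rw [SimpleGraph.mem_edgeSet, G1_adj] at he he'
    unfold Q at he he'
    omega

lemma cover_aux (u v t : ℤ) (h : Q (u - t) (v - t)) (h0 : 0 ≤ t) (h3 : t < 3) :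
    ∃ j : Fin 3, Q (u - ((j : ℕ) : ℤ)) (v - ((j : ℕ) : ℤ)) := by
  have ht : t = 0 ∨ t = 1 ∨ t = 2 := by omega
  rcases ht with rfl | rfl | rfl
  · exact ⟨0, by simpa using h⟩
  · exact ⟨1, by simpa using h⟩
  · exact ⟨2, by simpa using h⟩

lemma G1_cover (e : Sym2 ℤ) (he : e ∈ (cay ({1, 2, 4} : Set ℤ)).edgeSet) :
    ∃ j : Fin 3, e ∈ (G1 ((j : ℕ) : ℤ)).edgeSet := by
  induction e with
  | h u v =>
    rw [SimpleGraph.mem_edgeSet] at he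
    obtain ⟨hne, hd⟩ := he
    simp only [Set.mem_insert_iff, Set.mem_singleton_iff] at hd
    have key : ∃ j : Fin 3, Q (u - ((j : ℕ) : ℤ)) (v - ((j : ℕ) : ℤ)) := by
      rcases hd with (h | h | h) | (h | h | h)
      · exact cover_aux u v (v % 3) (by unfold Q; omega) (by omega) (by omega)
      · exact cover_aux u v ((v+1) % 3) (by unfold Q; omega) (by omega) (by omega)
      · exact cover_aux u v ((v+1) % 3) (by unfold Q; omega) (by omega) (by omega)
      · exact cover_aux u v (u % 3) (by unfold Q; omega) (by omega) (by omega)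
      · exact cover_aux u v ((u+1) % 3) (by unfold Q; omega) (by omega) (by omega)
      · exact cover_aux u v ((u+1) % 3) (by unfold Q; omega) (by omega) (by omega)
    obtain ⟨j, hj⟩ := key
    exact ⟨j, by rw [SimpleGraph.mem_edgeSet, G1_adj]; exact hj⟩

theorem stmt10 :
    ∀ H1 : SimpleGraph ℤ,
      H1 = (⨆ i : ℤ, shiftGraph (listGraph [0, 1, -1, 3]) (3 * i)) →
      (∀ j : Fin 3, IsHamPath (cay ({1, 2, 4} : Set ℤ)) (shiftGraph H1 ((j : ℕ) : ℤ))) ∧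
      (∀ j j' : Fin 3, j ≠ j' →
        Disjoint (shiftGraph H1 ((j : ℕ) : ℤ)).edgeSet (shiftGraph H1 ((j' : ℕ) : ℤ)).edgeSet) ∧
      (∀ e ∈ (cay ({1, 2, 4} : Set ℤ)).edgeSet,
        ∃ j : Fin 3, e ∈ (shiftGraph H1 ((j : ℕ) : ℤ)).edgeSet) := by
  intro H1 hH1
  subst hH1
  refine ⟨fun j => ⟨G1_le _, G1_conn _, G1_deg _⟩, fun j j' hne => ?_, fun e he => G1_cover e he⟩
  exact G1_disj _ _ (Int.natCast_nonneg _) (by exact_mod_cast j.isLt)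
    (Int.natCast_nonneg _) (by exact_mod_cast j'.isLt)
    (fun h => hne (Fin.ext (by exact_mod_cast h)))
end

section
/- Let k ≥ 3 be odd and let a₁, ..., a_{k-1} be distinct positive integers not divisible by k such that a₁ + ⋯ + a_{k-1} + k ≡ k (mod 2) (equivalently, a₁ + ⋯ + a_{k-1} is even). Suppose there is a Hamilton path Q in the complete graph on ℤ_k such that the multiset of edge lengths of Q equals the multiset {ℓ([0],[aᵢ]) : i = 1, ..., k-1}, where ℓ denotes circular distance in ℤ_k. Then Cay(ℤ, ±{a₁, ..., a_{k-1}, k}) admits a decomposition into k edge-disjoint two-way-infinite Hamilton paths. -/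
/-- Circular distance of `x` from `0` in `ℤ_k`. -/
def circDist (k : ℕ) (x : ZMod k) : ℕ := min x.val (k - x.val)

namespace S12

def E2 (p q u v : ℤ) : Prop := (u = p ∧ v = q) ∨ (u = q ∧ v = p)

lemma E2.symm {p q u v : ℤ} (h : E2 p q u v) : E2 p q v u := by
  rcases h with ⟨h1, h2⟩ | ⟨h1, h2⟩
  · exact Or.inr ⟨h2, h1⟩
  · exact Or.inl ⟨h2, h1⟩

lemma E2.resolve {p q p' q' u v : ℤ} (h : E2 p q u v) (h' : E2 p' q' u v) :
    (p = p' ∧ q = q') ∨ (p = q' ∧ q = p') := by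
  rcases h with ⟨h1, h2⟩ | ⟨h1, h2⟩ <;> rcases h' with ⟨h3, h4⟩ | ⟨h3, h4⟩ <;> omega

def xx (e : ℕ → ℤ) (t : ℕ) : ℤ := ∑ l ∈ Finset.range t, e l

lemma xx_succ (e : ℕ → ℤ) (t : ℕ) : xx e (t + 1) = xx e t + e t :=
  Finset.sum_range_succ e t

lemma xx_zero (e : ℕ → ℤ) : xx e 0 = 0 := Finset.sum_range_zero e

def ray (k K : ℕ) (e : ℕ → ℤ) (i : ℤ) : SimpleGraph ℤ where
  Adj u v := u ≠ v ∧
    ((∃ j, j < K ∧ ∃ n : ℤ, E2 (xx e j + i + n*k) (xx e (j+1) + i + n*k) u v) ∨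
     (∃ n : ℤ, n % 2 = i % 2 ∧ E2 (xx e K + i + n*k) (xx e K + i + (n+1)*k) u v) ∨
     (∃ n : ℤ, n % 2 ≠ i % 2 ∧ E2 (i + n*k) (i + (n+1)*k) u v))
  symm := by
    constructor
    rintro u v ⟨hne, h⟩
    refine ⟨hne.symm, ?_⟩
    rcases h with ⟨j, hj, n, h⟩ | ⟨n, hn, h⟩ | ⟨n, hn, h⟩
    · exact Or.inl ⟨j, hj, n, h.symm⟩
    · exact Or.inr (Or.inl ⟨n, hn, h.symm⟩)
    · exact Or.inr (Or.inr ⟨n, hn, h.symm⟩)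
  loopless := ⟨fun v h => h.1 rfl⟩

lemma dvd_small_eq {k c : ℤ} (hk : 0 < k) (h : k ∣ c) (h1 : -k < c) (h2 : c < k) : c = 0 := by
  rcases h with ⟨t, rfl⟩
  rcases lt_trichotomy t 0 with ht | ht | ht
  · nlinarith
  · simp [ht]
  · nlinarith

lemma quot_bound {k c v : ℤ} (hk : 0 < k) (h : v = k * c) (h1 : -(2*k) < v) (h2 : v < k) :
    c = -1 ∨ c = 0 := by
  have h3 : -2 < c := by nlinarith
  have h4 : c < 1 := by nlinarith
  omega

set_option maxHeartbeats 1600000 in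
lemma main (k K : ℕ) (hk : k = K + 1) (hK2 : 2 ≤ K) (hkodd : Odd k)
    (a : Fin K → ℤ) (hapos : ∀ i, 0 < a i)
    (handvd : ∀ i, ¬ ((k : ℤ) ∣ a i))
    (e : ℕ → ℤ)
    (hebij : ∀ i : Fin K, ∃! t, t < K ∧ |e t| = a i)
    (heS : ∀ t, t < K → ∃ i, |e t| = a i)
    (hxinj : ∀ t t', t ≤ K → t' ≤ K → (k:ℤ) ∣ (xx e t - xx e t') → t = t')
    (heven : Even (xx e K)) :
    HamDecomp (cay (Set.range a ∪ {(k : ℤ)})) k := by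
  have hk0 : (0:ℤ) < (k:ℤ) := by exact_mod_cast Nat.pos_of_ne_zero (by omega)
  have heNe : ∀ t, t < K → e t ≠ 0 := by
    intro t ht h0
    obtain ⟨i, hi⟩ := heS t ht
    have := hapos i
    rw [h0] at hi
    simp at hi
    omega
  have heK : ∀ t, t < K → ¬ ((k:ℤ) ∣ e t) := by
    intro t ht hdvd
    obtain ⟨i, hi⟩ := heS t ht
    exact handvd i (hi ▸ (dvd_abs _ _).mpr hdvd)
  have heInj : ∀ t t', t < K → t' < K → |e t| = |e t'| → t = t' := by
    intro t t' ht ht' h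
    obtain ⟨i, hi⟩ := heS t ht
    obtain ⟨j, hj, huniq⟩ := hebij i
    have h1 := huniq t ⟨ht, hi⟩
    have h2 := huniq t' ⟨ht', h ▸ hi⟩
    omega
  -- X, d, M
  set X : ℤ := xx e K with hXdef
  set d : ℤ := X % k with hddef
  set M : ℤ := X / k with hMdef
  have hXdM : X = k * M + d := (Int.mul_ediv_add_emod X k).symm
  have hXnd : ¬ ((k:ℤ) ∣ X) := by
    intro hdvd
    have : K = 0 := hxinj K 0 le_rfl (by omega) (by simpa [xx_zero] using hdvd)
    omega
  have hd1 : 0 < d := by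
    rcases (Int.emod_nonneg X (by omega : (k:ℤ) ≠ 0)).lt_or_eq with h | h
    · exact h
    · exact absurd (Int.dvd_of_emod_eq_zero h.symm) hXnd
  have hdk : d < k := Int.emod_lt_of_pos X hk0
  obtain ⟨s, hs⟩ := hkodd
  have hsZ : (k:ℤ) = 2 * s + 1 := by exact_mod_cast hs
  have hMd : (M + d) % 2 = 0 := by
    obtain ⟨r, hr⟩ := heven
    have hXdM' := hXdM
    rw [hsZ] at hXdM'
    have key : ∃ w : ℤ, M + d = 2*w := ⟨r - s*M, by linear_combination hr - hXdM'⟩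
    obtain ⟨w, hw⟩ := key
    omega
  -- decomposition of any vertex
  have hdecomp : ∀ v i : ℤ, ∃ t n, t ≤ K ∧ v = xx e t + i + n * k := by
    haveI : NeZero k := ⟨by omega⟩
    have hsurj : Function.Surjective (fun t : Fin (K+1) => ((xx e t : ℤ) : ZMod k)) := by
      have hinj : Function.Injective (fun t : Fin (K+1) => ((xx e t : ℤ) : ZMod k)) := by
        intro t t' h
        simp only at h
        have hdvd : (k:ℤ) ∣ (xx e t - xx e t') := by
          have : ((xx e t - xx e t' : ℤ) : ZMod k) = 0 := by push_cast [h]; ring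
          exact (ZMod.intCast_zmod_eq_zero_iff_dvd _ k).mp this
        exact Fin.ext (hxinj t t' (by omega) (by omega) hdvd)
      exact ((Fintype.bijective_iff_injective_and_card _).mpr
        ⟨hinj, by simp [ZMod.card, hk]⟩).surjective
    intro v i
    obtain ⟨t, ht⟩ := hsurj ((v - i : ℤ) : ZMod k)
    simp only at ht
    have : ((v - i - xx e t : ℤ) : ZMod k) = 0 := by push_cast [ht]; ring
    obtain ⟨n, hn⟩ := (ZMod.intCast_zmod_eq_zero_iff_dvd _ k).mp this
    exact ⟨t, n, by omega, by linarith⟩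
  have hadj_le : ∀ i : ℤ, ray k K e i ≤ cay (Set.range a ∪ {(k : ℤ)}) := by
    rintro i u v ⟨hne, h⟩
    refine ⟨hne, ?_⟩
    rcases h with ⟨j, hj, n, hE⟩ | ⟨n, _, hE⟩ | ⟨n, _, hE⟩
    · obtain ⟨i₀, hi₀⟩ := heS j hj
      have hq : xx e (j+1) = xx e j + e j := xx_succ e j
      rcases hE with ⟨rfl, rfl⟩ | ⟨rfl, rfl⟩ <;>
        rcases abs_cases (e j) with ⟨h1, _⟩ | ⟨h1, _⟩
      · exact Or.inr (Set.mem_union_left _ ⟨i₀, by linarith⟩)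
      · exact Or.inl (Set.mem_union_left _ ⟨i₀, by linarith⟩)
      · exact Or.inl (Set.mem_union_left _ ⟨i₀, by linarith⟩)
      · exact Or.inr (Set.mem_union_left _ ⟨i₀, by linarith⟩)
    · rcases hE with ⟨rfl, rfl⟩ | ⟨rfl, rfl⟩
      · exact Or.inr (Set.mem_union_right _ (Set.mem_singleton_iff.mpr (by ring)))
      · exact Or.inl (Set.mem_union_right _ (Set.mem_singleton_iff.mpr (by ring)))
    · rcases hE with ⟨rfl, rfl⟩ | ⟨rfl, rfl⟩
      · exact Or.inr (Set.mem_union_right _ (Set.mem_singleton_iff.mpr (by ring)))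
      · exact Or.inl (Set.mem_union_right _ (Set.mem_singleton_iff.mpr (by ring)))
  have hconn : ∀ i : ℤ, (ray k K e i).Connected := by
    intro i
    have hreach1 : ∀ t, t ≤ K → ∀ n : ℤ,
        (ray k K e i).Reachable (i + n*↑k) (xx e t + i + n*↑k) := by
      intro t
      induction t with
      | zero =>
        intro _ n
        have h0 : xx e 0 + i + n*(k:ℤ) = i + n*↑k := by rw [xx_zero]; ring
        rw [h0]
      | succ t ih =>
        intro ht n
        have h1 := ih (by omega) n
        have hadj : (ray k K e i).Adj (xx e t + i + n*↑k) (xx e (t+1) + i + n*↑k) := by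
          refine ⟨?_, Or.inl ⟨t, by omega, n, Or.inl ⟨rfl, rfl⟩⟩⟩
          have hne0 := heNe t (by omega)
          rw [xx_succ]
          intro hcon
          apply hne0
          linarith
        exact h1.trans hadj.reachable
    have hstep : ∀ n : ℤ, (ray k K e i).Reachable (i + n*↑k) (i + (n+1)*↑k) := by
      intro n
      by_cases hpar : n % 2 = i % 2
      · have h1 := hreach1 K le_rfl n
        have h2 := hreach1 K le_rfl (n+1)
        have hadj : (ray k K e i).Adj (xx e K + i + n*↑k) (xx e K + i + (n+1)*↑k) := by
          refine ⟨?_, Or.inr (Or.inl ⟨n, hpar, Or.inl ⟨rfl, rfl⟩⟩)⟩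
          intro hcon
          have : (0:ℤ) = ↑k := by linear_combination hcon
          omega
        exact h1.trans (hadj.reachable.trans h2.symm)
      · refine SimpleGraph.Adj.reachable ⟨?_, Or.inr (Or.inr ⟨n, hpar, Or.inl ⟨rfl, rfl⟩⟩)⟩
        intro hcon
        have : (0:ℤ) = ↑k := by linear_combination hcon
        omega
    have hbase : ∀ n : ℤ, (ray k K e i).Reachable i (i + n*↑k) := by
      intro n
      induction n using Int.induction_on with
      | zero =>
        have h0 : i + (0:ℤ)*↑k = i := by ring
        rw [h0]
      | succ m ih => exact ih.trans (hstep m)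
      | pred m ih =>
        have h := hstep (-(m:ℤ) - 1)
        have heq : (-(m:ℤ) - 1 + 1) = -(m:ℤ) := by ring
        rw [heq] at h
        exact ih.trans h.symm
    rw [SimpleGraph.connected_iff]
    refine ⟨?_, ⟨0⟩⟩
    intro u w
    obtain ⟨t, n, ht, hu⟩ := hdecomp u i
    obtain ⟨t', n', ht', hw⟩ := hdecomp w i
    rw [hu, hw]
    exact ((hbase n).trans (hreach1 t ht n)).symm.trans ((hbase n').trans (hreach1 t' ht' n'))
  have hkne : (k:ℤ) ≠ 0 := by omega
  have hdeg : ∀ i : ℤ, ∀ v : ℤ, ((ray k K e i).neighborSet v).ncard = 2 := by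
    intro i v
    obtain ⟨t, n, htK, hv⟩ := hdecomp v i
    have hrep : ∀ t' (n' : ℤ), t' ≤ K → v = xx e t' + i + n' * ↑k → t' = t ∧ n' = n := by
      intro t' n' ht' hv'
      have hdvd : (k:ℤ) ∣ (xx e t' - xx e t) := ⟨n - n', by linarith⟩
      have htt := hxinj t' t ht' htK hdvd
      subst htt
      refine ⟨rfl, mul_right_cancel₀ hkne ?_⟩
      linarith
    by_cases ht0 : t = 0
    · have hv0 : v = i + n*↑k := by
        rw [ht0, xx_zero] at hv; linarith
      by_cases hpar : n % 2 = i % 2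
      · have hset : (ray k K e i).neighborSet v = {v + e 0, v - ↑k} := by
          ext u
          simp only [SimpleGraph.mem_neighborSet, Set.mem_insert_iff, Set.mem_singleton_iff]
          constructor
          · rintro ⟨hne, ⟨j, hj, m, hE⟩ | ⟨m, hm, hE⟩ | ⟨m, hm, hE⟩⟩
            · rcases hE with ⟨h1, h2⟩ | ⟨h1, h2⟩
              · obtain ⟨hj0, hmn⟩ := hrep j m (by omega) h1
                have hj0' : j = 0 := by omega
                rw [hj0'] at h1 h2
                have s0 := xx_succ e 0
                have z0 := xx_zero e
                left; linarith
              · obtain ⟨hj0, hmn⟩ := hrep (j+1) m (by omega) h1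
                omega
            · rcases hE with ⟨h1, h2⟩ | ⟨h1, h2⟩
              · obtain ⟨hj0, hmn⟩ := hrep K m le_rfl h1
                omega
              · obtain ⟨hj0, hmn⟩ := hrep K (m+1) le_rfl (by linarith)
                omega
            · rcases hE with ⟨h1, h2⟩ | ⟨h1, h2⟩
              · have hmn := (hrep 0 m (by omega) (by rw [xx_zero]; linarith)).2
                exfalso; omega
              · have hmn := (hrep 0 (m+1) (by omega) (by rw [xx_zero]; linarith)).2
                right; linarith
          · rintro (rfl | rfl)
            · refine ⟨?_, Or.inl ⟨0, by omega, n, Or.inl ⟨by rw [xx_zero]; linarith, ?_⟩⟩⟩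
              · have h0 := heNe 0 (by omega)
                intro hcon; apply h0; linarith
              · have s0 := xx_succ e 0
                have z0 := xx_zero e
                linarith
            · refine ⟨?_, Or.inr (Or.inr ⟨n - 1, by omega, Or.inr ⟨by linarith, by linarith⟩⟩)⟩
              intro hcon; omega
        rw [hset]
        refine Set.ncard_pair ?_
        intro hcon
        exact heK 0 (by omega) ⟨-1, by linarith⟩
      · have hset : (ray k K e i).neighborSet v = {v + e 0, v + ↑k} := by
          ext u
          simp only [SimpleGraph.mem_neighborSet, Set.mem_insert_iff, Set.mem_singleton_iff]
          constructor
          · rintro ⟨hne, ⟨j, hj, m, hE⟩ | ⟨m, hm, hE⟩ | ⟨m, hm, hE⟩⟩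
            · rcases hE with ⟨h1, h2⟩ | ⟨h1, h2⟩
              · obtain ⟨hj0, hmn⟩ := hrep j m (by omega) h1
                have hj0' : j = 0 := by omega
                rw [hj0'] at h1 h2
                have s0 := xx_succ e 0
                have z0 := xx_zero e
                left; linarith
              · obtain ⟨hj0, hmn⟩ := hrep (j+1) m (by omega) h1
                omega
            · rcases hE with ⟨h1, h2⟩ | ⟨h1, h2⟩
              · obtain ⟨hj0, hmn⟩ := hrep K m le_rfl h1
                omega
              · obtain ⟨hj0, hmn⟩ := hrep K (m+1) le_rfl (by linarith)
                omega
            · rcases hE with ⟨h1, h2⟩ | ⟨h1, h2⟩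
              · have hmn := (hrep 0 m (by omega) (by rw [xx_zero]; linarith)).2
                right; linarith
              · have hmn := (hrep 0 (m+1) (by omega) (by rw [xx_zero]; linarith)).2
                exfalso; omega
          · rintro (rfl | rfl)
            · refine ⟨?_, Or.inl ⟨0, by omega, n, Or.inl ⟨by rw [xx_zero]; linarith, ?_⟩⟩⟩
              · have h0 := heNe 0 (by omega)
                intro hcon; apply h0; linarith
              · have s0 := xx_succ e 0
                have z0 := xx_zero e
                linarith
            · refine ⟨?_, Or.inr (Or.inr ⟨n, by omega, Or.inl ⟨by linarith, by linarith⟩⟩)⟩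
              intro hcon; omega
        rw [hset]
        refine Set.ncard_pair ?_
        intro hcon
        exact heK 0 (by omega) ⟨1, by linarith⟩
    · by_cases htKK : t = K
      · rw [htKK] at hv hrep
        by_cases hpar : n % 2 = i % 2
        · have hset : (ray k K e i).neighborSet v = {v - e (K-1), v + ↑k} := by
            ext u
            simp only [SimpleGraph.mem_neighborSet, Set.mem_insert_iff, Set.mem_singleton_iff]
            constructor
            · rintro ⟨hne, ⟨j, hj, m, hE⟩ | ⟨m, hm, hE⟩ | ⟨m, hm, hE⟩⟩
              · rcases hE with ⟨h1, h2⟩ | ⟨h1, h2⟩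
                · obtain ⟨hj0, hmn⟩ := hrep j m (by omega) h1
                  omega
                · obtain ⟨hj0, hmn⟩ := hrep (j+1) m (by omega) h1
                  have s0 := xx_succ e j
                  have hxK : xx e (j+1) = xx e K := by rw [hj0]
                  rw [show K - 1 = j from by omega]
                  left; linarith
              · rcases hE with ⟨h1, h2⟩ | ⟨h1, h2⟩
                · have hmn := (hrep K m le_rfl h1).2
                  right; linarith
                · have hmn := (hrep K (m+1) le_rfl (by linarith)).2
                  exfalso; omega
              · rcases hE with ⟨h1, h2⟩ | ⟨h1, h2⟩
                · have h0 := (hrep 0 m (by omega) (by rw [xx_zero]; linarith)).1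
                  omega
                · have h0 := (hrep 0 (m+1) (by omega) (by rw [xx_zero]; linarith)).1
                  omega
            · rintro (rfl | rfl)
              · refine ⟨?_, Or.inl ⟨K-1, by omega, n, Or.inr ⟨?_, ?_⟩⟩⟩
                · have h0 := heNe (K-1) (by omega)
                  intro hcon; apply h0; linarith
                · rw [show K - 1 + 1 = K from by omega]; exact hv
                · have s0 := xx_succ e (K-1)
                  rw [show K - 1 + 1 = K from by omega] at s0
                  linarith
              · refine ⟨?_, Or.inr (Or.inl ⟨n, hpar, Or.inl ⟨hv, by linarith⟩⟩)⟩
                intro hcon; omega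
          rw [hset]
          refine Set.ncard_pair ?_
          intro hcon
          exact heK (K-1) (by omega) ⟨-1, by linarith⟩
        · have hset : (ray k K e i).neighborSet v = {v - e (K-1), v - ↑k} := by
            ext u
            simp only [SimpleGraph.mem_neighborSet, Set.mem_insert_iff, Set.mem_singleton_iff]
            constructor
            · rintro ⟨hne, ⟨j, hj, m, hE⟩ | ⟨m, hm, hE⟩ | ⟨m, hm, hE⟩⟩
              · rcases hE with ⟨h1, h2⟩ | ⟨h1, h2⟩
                · obtain ⟨hj0, hmn⟩ := hrep j m (by omega) h1
                  omega
                · obtain ⟨hj0, hmn⟩ := hrep (j+1) m (by omega) h1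
                  have s0 := xx_succ e j
                  have hxK : xx e (j+1) = xx e K := by rw [hj0]
                  rw [show K - 1 = j from by omega]
                  left; linarith
              · rcases hE with ⟨h1, h2⟩ | ⟨h1, h2⟩
                · have hmn := (hrep K m le_rfl h1).2
                  exfalso; omega
                · have hmn := (hrep K (m+1) le_rfl (by linarith)).2
                  right; linarith
              · rcases hE with ⟨h1, h2⟩ | ⟨h1, h2⟩
                · have h0 := (hrep 0 m (by omega) (by rw [xx_zero]; linarith)).1
                  omega
                · have h0 := (hrep 0 (m+1) (by omega) (by rw [xx_zero]; linarith)).1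
                  omega
            · rintro (rfl | rfl)
              · refine ⟨?_, Or.inl ⟨K-1, by omega, n, Or.inr ⟨?_, ?_⟩⟩⟩
                · have h0 := heNe (K-1) (by omega)
                  intro hcon; apply h0; linarith
                · rw [show K - 1 + 1 = K from by omega]; exact hv
                · have s0 := xx_succ e (K-1)
                  rw [show K - 1 + 1 = K from by omega] at s0
                  linarith
              · refine ⟨?_, Or.inr (Or.inl ⟨n - 1, by omega, Or.inr ⟨by linarith, by linarith⟩⟩)⟩
                intro hcon; omega
          rw [hset]
          refine Set.ncard_pair ?_
          intro hcon
          exact heK (K-1) (by omega) ⟨1, by linarith⟩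
      · have htK2 : t < K := by omega
        have hset : (ray k K e i).neighborSet v = {v - e (t-1), v + e t} := by
          ext u
          simp only [SimpleGraph.mem_neighborSet, Set.mem_insert_iff, Set.mem_singleton_iff]
          constructor
          · rintro ⟨hne, ⟨j, hj, m, hE⟩ | ⟨m, hm, hE⟩ | ⟨m, hm, hE⟩⟩
            · rcases hE with ⟨h1, h2⟩ | ⟨h1, h2⟩
              · obtain ⟨hj0, hmn⟩ := hrep j m (by omega) h1
                have s0 := xx_succ e j
                rw [← hj0]
                right; linarith
              · obtain ⟨hj0, hmn⟩ := hrep (j+1) m (by omega) h1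
                have s0 := xx_succ e j
                have hxt : xx e (j+1) = xx e t := by rw [hj0]
                rw [show t - 1 = j from by omega]
                left; linarith
            · rcases hE with ⟨h1, h2⟩ | ⟨h1, h2⟩
              · have h0 := (hrep K m le_rfl h1).1
                omega
              · have h0 := (hrep K (m+1) le_rfl (by linarith)).1
                omega
            · rcases hE with ⟨h1, h2⟩ | ⟨h1, h2⟩
              · have h0 := (hrep 0 m (by omega) (by rw [xx_zero]; linarith)).1
                omega
              · have h0 := (hrep 0 (m+1) (by omega) (by rw [xx_zero]; linarith)).1
                omega
          · rintro (rfl | rfl)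
            · refine ⟨?_, Or.inl ⟨t-1, by omega, n, Or.inr ⟨?_, ?_⟩⟩⟩
              · have h0 := heNe (t-1) (by omega)
                intro hcon; apply h0; linarith
              · rw [show t - 1 + 1 = t from by omega]; exact hv
              · have s0 := xx_succ e (t-1)
                rw [show t - 1 + 1 = t from by omega] at s0
                linarith
            · refine ⟨?_, Or.inl ⟨t, htK2, n, Or.inl ⟨hv, ?_⟩⟩⟩
              · have h0 := heNe t htK2
                intro hcon; apply h0; linarith
              · have s0 := xx_succ e t
                linarith
        rw [hset]
        refine Set.ncard_pair ?_
        intro hcon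
        have hee : e (t-1) = - e t := by linarith
        have := heInj (t-1) t (by omega) htK2 (by rw [hee, abs_neg])
        omega
  have tb : ∀ i i' n n' : ℤ, 0 ≤ i → i < k → 0 ≤ i' → i' < k →
      n % 2 = i % 2 → n' % 2 ≠ i' % 2 → xx e K + i + n*↑k = i' + n'*↑k → False := by
    intro i i' n n' hi0 hik hi0' hik' hn hn' heq
    have hveq : i' - i - d = ↑k * (M + n - n') := by linear_combination hXdM - heq
    rcases quot_bound hk0 hveq (by omega) (by omega) with hc | hc
    · have hv : i' - i - d = -↑k := by rw [hc] at hveq; linarith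
      omega
    · have hv : i' - i - d = 0 := by rw [hc] at hveq; linarith
      omega
  have huniq : ∀ i i' : ℤ, 0 ≤ i → i < k → 0 ≤ i' → i' < k → ∀ u v,
      (ray k K e i).Adj u v → (ray k K e i').Adj u v → i = i' := by
    rintro i i' hi0 hik hi0' hik' u v ⟨hneq, h⟩ ⟨hneq', h'⟩
    rcases h with ⟨j, hj, n, hE⟩ | ⟨n, hn, hE⟩ | ⟨n, hn, hE⟩ <;>
      rcases h' with ⟨j', hj', n', hE'⟩ | ⟨n', hn', hE'⟩ | ⟨n', hn', hE'⟩
    · -- block/block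
      have sj := xx_succ e j; have sj' := xx_succ e j'
      rcases hE.resolve hE' with ⟨h1, h2⟩ | ⟨h1, h2⟩
      · have hee : e j = e j' := by linarith
        have hjj : j = j' := heInj j j' hj hj' (by rw [hee])
        subst hjj
        have hii : i - i' = 0 :=
          dvd_small_eq hk0 ⟨n' - n, by linear_combination h1⟩ (by omega) (by omega)
        omega
      · have hee : e j = - e j' := by linarith
        have hjj : j = j' := heInj j j' hj hj' (by rw [hee, abs_neg])
        subst hjj
        exact absurd (by linarith : e j = 0) (heNe j hj)
    · -- block/top
      have sj := xx_succ e j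
      rcases hE.resolve hE' with ⟨h1, h2⟩ | ⟨h1, h2⟩
      · exact absurd ⟨1, by linarith⟩ (heK j hj)
      · exact absurd ⟨-1, by linarith⟩ (heK j hj)
    · -- block/bottom
      have sj := xx_succ e j
      rcases hE.resolve hE' with ⟨h1, h2⟩ | ⟨h1, h2⟩
      · exact absurd ⟨1, by linarith⟩ (heK j hj)
      · exact absurd ⟨-1, by linarith⟩ (heK j hj)
    · -- top/block
      have sj' := xx_succ e j'
      rcases hE.resolve hE' with ⟨h1, h2⟩ | ⟨h1, h2⟩
      · exact absurd ⟨1, by linarith⟩ (heK j' hj')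
      · exact absurd ⟨-1, by linarith⟩ (heK j' hj')
    · -- top/top
      rcases hE.resolve hE' with ⟨h1, h2⟩ | ⟨h1, h2⟩
      · have hii : i - i' = 0 :=
          dvd_small_eq hk0 ⟨n' - n, by linear_combination h1⟩ (by omega) (by omega)
        omega
      · have : (k:ℤ) = 0 := by linarith
        omega
    · -- top/bottom
      rcases hE.resolve hE' with ⟨h1, h2⟩ | ⟨h1, h2⟩
      · exact absurd (tb i i' n n' hi0 hik hi0' hik' hn hn' h1) not_false
      · have : (k:ℤ) = 0 := by linarith
        omega
    · -- bottom/block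
      have sj' := xx_succ e j'
      rcases hE.resolve hE' with ⟨h1, h2⟩ | ⟨h1, h2⟩
      · exact absurd ⟨1, by linarith⟩ (heK j' hj')
      · exact absurd ⟨-1, by linarith⟩ (heK j' hj')
    · -- bottom/top
      rcases hE.resolve hE' with ⟨h1, h2⟩ | ⟨h1, h2⟩
      · exact absurd (tb i' i n' n hi0' hik' hi0 hik hn' hn h1.symm) not_false
      · have : (k:ℤ) = 0 := by linarith
        omega
    · -- bottom/bottom
      rcases hE.resolve hE' with ⟨h1, h2⟩ | ⟨h1, h2⟩
      · have hii : i - i' = 0 :=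
          dvd_small_eq hk0 ⟨n' - n, by linear_combination h1⟩ (by omega) (by omega)
        omega
      · have : (k:ℤ) = 0 := by linarith
        omega
  have hcov : ∀ u v : ℤ, v - u ∈ Set.range a ∪ {(k:ℤ)} →
      ∃ i : ℤ, 0 ≤ i ∧ i < k ∧ (ray k K e i).Adj u v := by
    intro u v hmem
    have hkne : (k:ℤ) ≠ 0 := by omega
    rcases hmem with ⟨i₀, hi₀⟩ | hk'
    · -- a-edge, hi₀ : a i₀ = v - u
      obtain ⟨t, ⟨htK, habs⟩, -⟩ := hebij i₀
      have hpos := hapos i₀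
      rcases abs_cases (e t) with ⟨h1, _⟩ | ⟨h1, _⟩
      · -- e t = a i₀
        have hdm : u - xx e t = ↑k * ((u - xx e t) / ↑k) + (u - xx e t) % ↑k :=
          (Int.mul_ediv_add_emod _ _).symm
        refine ⟨(u - xx e t) % ↑k, Int.emod_nonneg _ hkne, Int.emod_lt_of_pos _ hk0,
          (by omega : u ≠ v),
          Or.inl ⟨t, htK, (u - xx e t) / ↑k, Or.inl ⟨by linarith, ?_⟩⟩⟩
        have s1 := xx_succ e t
        linarith
      · -- e t = -a i₀
        have hdm : u - xx e (t+1) = ↑k * ((u - xx e (t+1)) / ↑k) + (u - xx e (t+1)) % ↑k :=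
          (Int.mul_ediv_add_emod _ _).symm
        refine ⟨(u - xx e (t+1)) % ↑k, Int.emod_nonneg _ hkne, Int.emod_lt_of_pos _ hk0,
          (by omega : u ≠ v),
          Or.inl ⟨t, htK, (u - xx e (t+1)) / ↑k, Or.inr ⟨by linarith, ?_⟩⟩⟩
        have s1 := xx_succ e t
        linarith
    · -- k-edge
      have hvk : v - u = ↑k := hk'
      have hdm : u = ↑k * (u / ↑k) + u % ↑k := (Int.mul_ediv_add_emod _ _).symm
      have hi₁0 : 0 ≤ u % ↑k := Int.emod_nonneg _ hkne
      have hi₁k : u % ↑k < ↑k := Int.emod_lt_of_pos _ hk0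
      by_cases hpar : (u / ↑k) % 2 = (u % ↑k) % 2
      · -- top edge from ray i' = (u%k - d) % k
        have hc : u % ↑k - d = ↑k * ((u % ↑k - d) / ↑k) + (u % ↑k - d) % ↑k :=
          (Int.mul_ediv_add_emod _ _).symm
        have hi'0 : 0 ≤ (u % ↑k - d) % ↑k := Int.emod_nonneg _ hkne
        have hi'k : (u % ↑k - d) % ↑k < ↑k := Int.emod_lt_of_pos _ hk0
        have hcc : (u % ↑k - d) / ↑k = -1 ∨ (u % ↑k - d) / ↑k = 0 :=
          quot_bound hk0 (by linarith :
            u % ↑k - d - (u % ↑k - d) % ↑k = ↑k * ((u % ↑k - d) / ↑k))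
            (by omega) (by omega)
        refine ⟨(u % ↑k - d) % ↑k, hi'0, hi'k, (by omega : u ≠ v),
          Or.inr (Or.inl ⟨u / ↑k - M + (u % ↑k - d) / ↑k, ?_, Or.inl ⟨?_, ?_⟩⟩)⟩
        · rcases hcc with h | h <;> rw [h] at hc ⊢ <;> omega
        · linear_combination hdm + hc - hXdM
        · linear_combination hvk + hdm + hc - hXdM
      · -- bottom edge from ray u % k
        exact ⟨u % ↑k, hi₁0, hi₁k, (by omega : u ≠ v),
          Or.inr (Or.inr ⟨u / ↑k, hpar, Or.inl ⟨by linarith, by linarith⟩⟩)⟩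
  refine ⟨fun i => ray k K e ((i : ℕ) : ℤ), fun i => ⟨hadj_le _, hconn _, hdeg _⟩, ?_, ?_⟩
  · intro i j hij
    rw [Set.disjoint_left]
    intro ed hi hj
    induction ed using Sym2.ind with
    | _ u v =>
      rw [SimpleGraph.mem_edgeSet] at hi hj
      have : ((i : ℕ) : ℤ) = ((j : ℕ) : ℤ) := by
        refine huniq _ _ (by positivity) ?_ (by positivity) ?_ u v hi hj
        · exact_mod_cast i.isLt
        · exact_mod_cast j.isLt
      exact hij (Fin.ext (by exact_mod_cast this))
  · intro ed hed
    induction ed using Sym2.ind with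
    | _ u v =>
      rw [SimpleGraph.mem_edgeSet] at hed
      obtain ⟨hne, hmem | hmem⟩ := hed
      · obtain ⟨i, hi0, hik, hadj⟩ := hcov v u hmem
        refine ⟨⟨i.toNat, by omega⟩, ?_⟩
        rw [SimpleGraph.mem_edgeSet]
        have hcast : ((⟨i.toNat, by omega⟩ : Fin k) : ℤ) = i := by
          simp [Int.toNat_of_nonneg hi0]
        rw [← hcast] at hadj
        exact hadj.symm
      · obtain ⟨i, hi0, hik, hadj⟩ := hcov u v hmem
        refine ⟨⟨i.toNat, by omega⟩, ?_⟩
        rw [SimpleGraph.mem_edgeSet]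
        have hcast : ((⟨i.toNat, by omega⟩ : Fin k) : ℤ) = i := by
          simp [Int.toNat_of_nonneg hi0]
        rw [← hcast] at hadj
        exact hadj

end S12

theorem stmt12 (k : ℕ) (hk3 : 3 ≤ k) (hkodd : Odd k)
    (a : Fin (k-1) → ℤ) (hapos : ∀ i, 0 < a i) (hainj : Function.Injective a)
    (handvd : ∀ i, ¬ ((k : ℤ) ∣ a i))
    (heven : Even (∑ i, a i))
    (q : ℕ → ZMod k)
    (hq : ∀ x : ZMod k, ∃! j : ℕ, j < k ∧ q j = x)
    (hlen : Multiset.ofList ((List.range (k-1)).map fun i => circDist k (q (i+1) - q i))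
          = Multiset.ofList (List.ofFn fun i : Fin (k-1) => circDist k ((a i : ZMod k)))) :
    HamDecomp (cay (Set.range a ∪ {(k : ℤ)})) k := by
  haveI : NeZero k := ⟨by omega⟩
  -- circular distance determines an element up to sign
  have hcirc : ∀ x y : ZMod k, circDist k x = circDist k y → x = y ∨ x = -y := by
    intro x y h
    have hx := ZMod.val_lt x
    have hy := ZMod.val_lt y
    unfold circDist at h
    have hval : x.val = y.val ∨ x.val + y.val = k := by omega
    rcases hval with h' | h'
    · exact Or.inl (ZMod.val_injective k h')
    · right
      have h0 : ((x.val + y.val : ℕ) : ZMod k) = 0 := by rw [h']; exact ZMod.natCast_self k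
      push_cast at h0
      rw [ZMod.natCast_zmod_val, ZMod.natCast_zmod_val] at h0
      linear_combination h0
  -- the matching permutation
  set f : Fin (k-1) → ℕ := fun j => circDist k (q (j+1) - q j) with hf
  set g : Fin (k-1) → ℕ := fun i => circDist k ((a i : ZMod k)) with hg
  have hofn : List.Perm (List.ofFn f) (List.ofFn g) := by
    have h1 : List.ofFn f = (List.range (k-1)).map (fun i => circDist k (q (i+1) - q i)) := by
      apply List.ext_getElem (by simp)
      intro n h1 h2
      simp [hf]
    rw [h1]
    exact Multiset.coe_eq_coe.mp hlen
  have hsorteq : f ∘ Tuple.sort f = g ∘ Tuple.sort g := by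
    apply List.ofFn_injective
    refine List.Perm.eq_of_sortedLE (Tuple.monotone_sort f).sortedLE_ofFn
      (Tuple.monotone_sort g).sortedLE_ofFn ?_
    exact ((Tuple.sort f).ofFn_comp_perm f).trans
      (hofn.trans ((Tuple.sort g).ofFn_comp_perm g).symm)
  set σ : Equiv.Perm (Fin (k-1)) := (Tuple.sort f).symm.trans (Tuple.sort g) with hσdef
  have hσ : ∀ j, f j = g (σ j) := by
    intro j
    have h1 := congrFun hsorteq ((Tuple.sort f).symm j)
    simpa [hσdef] using h1
  -- the signed step sequence
  set E : ℕ → ℤ := fun t => if h : t < k - 1 then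
      (if ((a (σ ⟨t, h⟩) : ZMod k) = q (t+1) - q t) then a (σ ⟨t, h⟩) else -(a (σ ⟨t, h⟩)))
    else 1 with hE
  have hq0 : ∀ t (h : t < k - 1),
      ((E t : ZMod k) = q (t+1) - q t) ∧ |E t| = a (σ ⟨t, h⟩) := by
    intro t h
    have hEt : E t = if ((a (σ ⟨t, h⟩) : ZMod k) = q (t+1) - q t) then a (σ ⟨t, h⟩)
        else -(a (σ ⟨t, h⟩)) := by rw [hE]; simp [dif_pos h]
    rw [hEt]
    split_ifs with hsign
    · exact ⟨hsign, abs_of_pos (hapos _)⟩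
    · constructor
      · have hfg := hσ ⟨t, h⟩
        rcases hcirc _ _ hfg with hcase | hcase
        · exact absurd hcase.symm hsign
        · push_cast
          linear_combination -hcase
      · rw [abs_neg]; exact abs_of_pos (hapos _)
  have hebij : ∀ i : Fin (k-1), ∃! t, t < k - 1 ∧ |E t| = a i := by
    intro i
    refine ⟨(σ.symm i).val, ⟨(σ.symm i).isLt, ?_⟩, ?_⟩
    · have h2 := (hq0 (σ.symm i).val (σ.symm i).isLt).2
      rwa [Fin.eta, Equiv.apply_symm_apply] at h2
    · rintro t' ⟨ht', habs'⟩
      have h2 := (hq0 t' ht').2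
      rw [habs'] at h2
      have h3 := hainj h2.symm
      have h4 : (⟨t', ht'⟩ : Fin (k-1)) = σ.symm i := by
        rw [Equiv.eq_symm_apply]; exact h3
      exact congrArg Fin.val h4
  have heS : ∀ t, t < k - 1 → ∃ i, |E t| = a i := fun t h => ⟨σ ⟨t, h⟩, (hq0 t h).2⟩
  -- injectivity of partial sums mod k
  have qinj : ∀ j j', j < k → j' < k → q j = q j' → j = j' := by
    intro j j' hj hj' h
    obtain ⟨w, hw, huni⟩ := hq (q j)
    have h1 := huni j ⟨hj, rfl⟩
    have h2 := huni j' ⟨hj', h.symm⟩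
    omega
  have hcast : ∀ t, t ≤ k - 1 → ((S12.xx E t : ℤ) : ZMod k) = q t - q 0 := by
    intro t
    induction t with
    | zero => intro _; rw [S12.xx_zero]; simp
    | succ t ih =>
      intro ht
      have h1 := ih (by omega)
      rw [S12.xx_succ]
      push_cast
      rw [h1, (hq0 t (by omega)).1]
      ring
  have hxinj : ∀ t t', t ≤ k - 1 → t' ≤ k - 1 → (k:ℤ) ∣ (S12.xx E t - S12.xx E t') → t = t' := by
    intro t t' ht ht' hdvd
    have h0 : ((S12.xx E t - S12.xx E t' : ℤ) : ZMod k) = 0 :=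
      (ZMod.intCast_zmod_eq_zero_iff_dvd _ _).mpr hdvd
    push_cast at h0
    rw [hcast t ht, hcast t' ht'] at h0
    have hqq : q t = q t' := by linear_combination h0
    exact qinj t t' (by omega) (by omega) hqq
  -- parity of the total shift
  have hevenE : Even (S12.xx E (k-1)) := by
    have hsum : ∑ t ∈ Finset.range (k-1), |E t| = ∑ i, a i := by
      rw [← Fin.sum_univ_eq_sum_range (fun t => |E t|) (k-1)]
      rw [← Equiv.sum_comp σ a]
      apply Finset.sum_congr rfl
      intro t _
      have h2 := (hq0 t.val t.isLt).2
      rwa [Fin.eta] at h2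
    have h2 : Even (∑ t ∈ Finset.range (k-1), (E t + |E t|)) := by
      apply Finset.sum_induction _ Even (fun x y hx hy => hx.add hy) Even.zero
      intro t _
      rcases abs_cases (E t) with ⟨h, _⟩ | ⟨h, _⟩
      · exact ⟨E t, by linarith⟩
      · exact ⟨0, by linarith⟩
    rw [Finset.sum_add_distrib, hsum] at h2
    obtain ⟨r, hr⟩ := h2
    obtain ⟨p, hp⟩ := heven
    exact ⟨r - p, by have : S12.xx E (k-1) = ∑ t ∈ Finset.range (k-1), E t := rfl; omega⟩
  exact S12.main k (k-1) (by omega) (by omega) hkodd a hapos handvd E hebij heS hxinj hevenE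
end

section
/- If k ≥ 3 is odd and a₁, ..., a_{k-1} are distinct positive integers with aᵢ ≡ i (mod k) for each i, and a₁ + ⋯ + a_{k-1} is even, then Cay(ℤ, ±{a₁, ..., a_{k-1}, k}) admits a decomposition into k edge-disjoint two-way-infinite Hamilton paths. -/
namespace HD
variable (k : ℕ) (a : Fin (k-1) → ℤ)

def aa (t : ℕ) : ℤ := if h : t < k-1 then a ⟨t, h⟩ else 0
def SS (u : ℕ) : ℤ := ∑ t ∈ Finset.range u, (-1)^t * aa k a t
def sg (u : ℕ) : ℤ := if Even u then -((u/2 : ℕ) : ℤ) else ((u/2 : ℕ) : ℤ) + 1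

lemma SS_succ (u : ℕ) : SS k a (u+1) = SS k a u + (-1)^u * aa k a u :=
  Finset.sum_range_succ _ _

def bb (u : ℤ) : ℤ := if u < (k:ℤ) then SS k a u.toNat else SS k a (2*(k:ℤ)-1-u).toNat + k
def pp (t : ℤ) : ℤ := bb k a (t % (2*(k:ℤ))) + 2*(k:ℤ)*(t / (2*(k:ℤ)))
def xx (w : ℕ) : ℤ := if Even w then SS k a w else SS k a (w+1)

def DD (c : ℤ) : SimpleGraph ℤ where
  Adj u v := u ≠ v ∧ ∃ t : ℤ, (u = pp k a t + c ∧ v = pp k a (t+1) + c) ∨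
      (v = pp k a t + c ∧ u = pp k a (t+1) + c)
  symm := by
    constructor
    rintro u v ⟨h, t, ht⟩
    exact ⟨h.symm, t, ht.symm⟩
  loopless := ⟨fun v h => h.1 rfl⟩

variable {k a}

def Hcong : Prop := ∀ i : Fin (k-1), a i % (k : ℤ) = (((i : ℕ) : ℤ) + 1) % (k : ℤ)

lemma aa_cong (hcong : Hcong (k:=k) (a:=a)) (t : ℕ) (ht : t < k-1) :
    (k:ℤ) ∣ (aa k a t - ((t:ℤ)+1)) := by
  have h := hcong ⟨t, ht⟩
  have h2 : aa k a t = a ⟨t, ht⟩ := dif_pos ht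
  rw [h2]
  exact Int.ModEq.dvd (Int.ModEq.symm h)

lemma sg_step (u : ℕ) : sg (u+1) - sg u = (-1)^u * ((u:ℤ)+1) := by
  rcases Nat.even_or_odd u with he | ho
  · have h1 : ¬ Even (u+1) := by simp [Nat.even_add_one, he]
    have hpow : ((-1:ℤ))^u = 1 := he.neg_one_pow
    rw [sg, sg, if_pos he, if_neg h1, hpow]
    have : u % 2 = 0 := Nat.even_iff.mp he
    push_cast
    omega
  · have h1 : Even (u+1) := Nat.even_add_one.mpr (Nat.not_even_iff_odd.mpr ho)
    have hpow : ((-1:ℤ))^u = -1 := ho.neg_one_pow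
    rw [sg, sg, if_pos h1, if_neg (Nat.not_even_iff.mpr (Nat.odd_iff.mp ho)), hpow]
    have : u % 2 = 1 := Nat.odd_iff.mp ho
    push_cast
    omega

lemma SS_mod (hcong : Hcong (k:=k) (a:=a)) : ∀ u, u ≤ k-1 → (k:ℤ) ∣ (SS k a u - sg u)
  | 0, _ => by simp [SS, sg]
  | (u+1), h => by
    have ih := SS_mod hcong u (by omega)
    have hc := aa_cong hcong u (by omega)
    have he : SS k a (u+1) - sg (u+1) =
        (SS k a u - sg u) + (-1)^u * (aa k a u - ((u:ℤ)+1)) := by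
      have := sg_step u
      rw [SS_succ]; ring_nf; ring_nf at this ⊢; linarith [this]
    rw [he]
    exact dvd_add ih (Dvd.dvd.mul_left hc _)

lemma int_small_zero {z : ℤ} (h : (k:ℤ) ∣ z) (h1 : -(k:ℤ) < z) (h2 : z < k) : z = 0 := by
  rcases h with ⟨c, hc⟩
  rcases lt_trichotomy c 0 with h3 | h3 | h3
  · have : (k:ℤ) * (c+1) ≤ 0 := mul_nonpos_of_nonneg_of_nonpos (Int.natCast_nonneg k) (by omega)
    nlinarith
  · subst h3; rw [mul_zero] at hc; omega
  · have : 0 ≤ (k:ℤ) * (c-1) := mul_nonneg (Int.natCast_nonneg k) (by omega)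
    nlinarith

lemma SS_inj (hcong : Hcong (k:=k) (a:=a)) (hk3 : 3 ≤ k) (hkodd : Odd k) {u u' : ℕ}
    (hu : u ≤ k-1) (hu' : u' ≤ k-1) (h : (k:ℤ) ∣ (SS k a u - SS k a u')) : u = u' := by
  have h1 := SS_mod hcong u hu
  have h2 := SS_mod hcong u' hu'
  have hd : (k:ℤ) ∣ (sg u - sg u') := by
    have he : sg u - sg u' = (SS k a u - SS k a u') - (SS k a u - sg u) + (SS k a u' - sg u') := by
      ring
    rw [he]
    exact dvd_add (dvd_sub h h1) h2
  have hko : k % 2 = 1 := Nat.odd_iff.mp hkodd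
  have he : ∀ v, v ≤ k-1 → 2 * |sg v| ≤ (k:ℤ) - 1 := by
    intro v hv
    rcases Nat.even_or_odd v with hev | hod
    · have hv2 : v % 2 = 0 := Nat.even_iff.mp hev
      rw [sg, if_pos hev, abs_neg, abs_of_nonneg (by positivity)]
      push_cast; omega
    · have hv2 : v % 2 = 1 := Nat.odd_iff.mp hod
      rw [sg, if_neg (Nat.not_even_iff.mpr hv2), abs_of_nonneg (by positivity)]
      push_cast; omega
  have b1 := he u hu
  have b2 := he u' hu'
  have l1 : sg u ≤ |sg u| := le_abs_self _
  have l2 : -|sg u| ≤ sg u := neg_abs_le _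
  have l3 : sg u' ≤ |sg u'| := le_abs_self _
  have l4 : -|sg u'| ≤ sg u' := neg_abs_le _
  have hz : sg u - sg u' = 0 := int_small_zero hd (by omega) (by omega)
  -- now conclude u = u'
  rcases Nat.even_or_odd u with hev | hod <;> rcases Nat.even_or_odd u' with hev' | hod'
  · have e1 : u % 2 = 0 := Nat.even_iff.mp hev
    have e2 : u' % 2 = 0 := Nat.even_iff.mp hev'
    rw [sg, sg, if_pos hev, if_pos hev'] at hz; omega
  · have e1 : u % 2 = 0 := Nat.even_iff.mp hev
    have e2 : u' % 2 = 1 := Nat.odd_iff.mp hod'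
    rw [sg, sg, if_pos hev, if_neg (Nat.not_even_iff.mpr e2)] at hz; omega
  · have e1 : u % 2 = 1 := Nat.odd_iff.mp hod
    have e2 : u' % 2 = 0 := Nat.even_iff.mp hev'
    rw [sg, sg, if_neg (Nat.not_even_iff.mpr e1), if_pos hev'] at hz; omega
  · have e1 : u % 2 = 1 := Nat.odd_iff.mp hod
    have e2 : u' % 2 = 1 := Nat.odd_iff.mp hod'
    rw [sg, sg, if_neg (Nat.not_even_iff.mpr e1), if_neg (Nat.not_even_iff.mpr e2)] at hz; omega



lemma smk {x y z w : ℤ} (h1 : x = z) (h2 : y = w) : s(x,y) = s(z,w) := by rw [h1,h2]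

lemma pp_eq (hk : 0 < k) {t q u : ℤ} (h : t = 2*(k:ℤ)*q + u) (h0 : 0 ≤ u) (h1 : u < 2*k) :
    pp k a t = bb k a u + 2*(k:ℤ)*q := by
  have h' : t = u + 2*(k:ℤ)*q := by rw [h]; ring
  have hm : t % (2*(k:ℤ)) = u := by
    rw [h', Int.add_mul_emod_self_left]; exact Int.emod_eq_of_lt h0 h1
  have hd : t / (2*(k:ℤ)) = q := by
    rw [h', Int.add_mul_ediv_left _ q (by positivity : (2*(k:ℤ)) ≠ 0),
      Int.ediv_eq_zero_of_lt h0 h1, zero_add]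
  rw [pp, hm, hd]

lemma E1 (hk : 3 ≤ k) {w : ℕ} (hw : w < k-1) (q : ℤ) :
    s(pp k a ((w:ℤ) + 2*(k:ℤ)*q), pp k a ((w:ℤ) + 2*(k:ℤ)*q + 1)) =
    s(xx k a w + (2*q)*(k:ℤ), xx k a w + (2*q)*(k:ℤ) + aa k a w) := by
  have h1 : pp k a ((w:ℤ) + 2*(k:ℤ)*q) = SS k a w + 2*(k:ℤ)*q := by
    rw [pp_eq (by omega) (show (w:ℤ) + 2*(k:ℤ)*q = 2*(k:ℤ)*q + w by ring) (by positivity) (by push_cast; omega)]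
    rw [bb, if_pos (by push_cast; omega)]
    simp
  have h2 : pp k a ((w:ℤ) + 2*(k:ℤ)*q + 1) = SS k a (w+1) + 2*(k:ℤ)*q := by
    rw [pp_eq (by omega) (show (w:ℤ) + 2*(k:ℤ)*q + 1 = 2*(k:ℤ)*q + (w+1) by ring) (by positivity) (by push_cast; omega)]
    rw [bb, if_pos (by push_cast; omega), show ((w:ℤ)+1).toNat = w + 1 by omega]
  rw [h1, h2]
  rcases Nat.even_or_odd w with he | ho
  · rw [xx, if_pos he]
    exact smk (by ring) (by rw [SS_succ, he.neg_one_pow]; ring)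
  · rw [xx, if_neg (Nat.not_even_iff.mpr (Nat.odd_iff.mp ho)), Sym2.eq_swap]
    exact smk (by ring) (by rw [SS_succ, ho.neg_one_pow]; ring)

lemma E2 (hk : 3 ≤ k) (q : ℤ) :
    s(pp k a ((k:ℤ) - 1 + 2*(k:ℤ)*q), pp k a ((k:ℤ) - 1 + 2*(k:ℤ)*q + 1)) =
    s(SS k a (k-1) + 2*(k:ℤ)*q, SS k a (k-1) + 2*(k:ℤ)*q + k) := by
  have h1 : pp k a ((k:ℤ) - 1 + 2*(k:ℤ)*q) = SS k a (k-1) + 2*(k:ℤ)*q := by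
    rw [pp_eq (by omega) (show (k:ℤ) - 1 + 2*(k:ℤ)*q = 2*(k:ℤ)*q + ((k:ℤ)-1) by ring) (by push_cast; omega) (by push_cast; omega)]
    rw [bb, if_pos (by omega), show ((k:ℤ)-1).toNat = k-1 by omega]
  have h2 : pp k a ((k:ℤ) - 1 + 2*(k:ℤ)*q + 1) = SS k a (k-1) + 2*(k:ℤ)*q + k := by
    rw [pp_eq (by omega) (show (k:ℤ) - 1 + 2*(k:ℤ)*q + 1 = 2*(k:ℤ)*q + (k:ℤ) by ring) (by push_cast; omega) (by push_cast; omega)]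
    rw [bb, if_neg (by omega), show (2*(k:ℤ)-1-(k:ℤ)).toNat = k-1 by omega]
    try ring
  rw [h1, h2]

lemma E3 (hk : 3 ≤ k) {w : ℕ} (hw : w < k-1) (q : ℤ) :
    s(pp k a (2*(k:ℤ) - 2 - (w:ℤ) + 2*(k:ℤ)*q), pp k a (2*(k:ℤ) - 2 - (w:ℤ) + 2*(k:ℤ)*q + 1)) =
    s(xx k a w + (2*q+1)*(k:ℤ), xx k a w + (2*q+1)*(k:ℤ) + aa k a w) := by
  have h1 : pp k a (2*(k:ℤ) - 2 - (w:ℤ) + 2*(k:ℤ)*q) = SS k a (w+1) + (k:ℤ) + 2*(k:ℤ)*q := by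
    rw [pp_eq (by omega) (show 2*(k:ℤ) - 2 - (w:ℤ) + 2*(k:ℤ)*q = 2*(k:ℤ)*q + (2*(k:ℤ)-2-(w:ℤ)) by ring) (by push_cast; omega) (by push_cast; omega)]
    rw [bb, if_neg (by push_cast; omega), show (2*(k:ℤ)-1-(2*(k:ℤ)-2-(w:ℤ))).toNat = w+1 by omega]
    try ring
  have h2 : pp k a (2*(k:ℤ) - 2 - (w:ℤ) + 2*(k:ℤ)*q + 1) = SS k a w + (k:ℤ) + 2*(k:ℤ)*q := by
    rw [pp_eq (by omega) (show 2*(k:ℤ) - 2 - (w:ℤ) + 2*(k:ℤ)*q + 1 = 2*(k:ℤ)*q + (2*(k:ℤ)-1-(w:ℤ)) by ring) (by push_cast; omega) (by push_cast; omega)]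
    rw [bb, if_neg (by push_cast; omega), show (2*(k:ℤ)-1-(2*(k:ℤ)-1-(w:ℤ))).toNat = w by omega]
    try ring
  rw [h1, h2]
  rcases Nat.even_or_odd w with he | ho
  · rw [xx, if_pos he, Sym2.eq_swap]
    exact smk (by ring) (by rw [SS_succ, he.neg_one_pow]; ring)
  · rw [xx, if_neg (Nat.not_even_iff.mpr (Nat.odd_iff.mp ho))]
    exact smk (by ring) (by rw [SS_succ, ho.neg_one_pow]; ring)

lemma E4 (hk : 3 ≤ k) (q : ℤ) :
    s(pp k a (2*(k:ℤ) - 1 + 2*(k:ℤ)*q), pp k a (2*(k:ℤ) - 1 + 2*(k:ℤ)*q + 1)) =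
    s((k:ℤ) + 2*(k:ℤ)*q, (k:ℤ) + 2*(k:ℤ)*q + k) := by
  have h1 : pp k a (2*(k:ℤ) - 1 + 2*(k:ℤ)*q) = (k:ℤ) + 2*(k:ℤ)*q := by
    rw [pp_eq (by omega) (show 2*(k:ℤ) - 1 + 2*(k:ℤ)*q = 2*(k:ℤ)*q + (2*(k:ℤ)-1) by ring) (by push_cast; omega) (by push_cast; omega)]
    rw [bb, if_neg (by omega), show (2*(k:ℤ)-1-(2*(k:ℤ)-1)).toNat = 0 by omega]
    simp [SS]
  have h2 : pp k a (2*(k:ℤ) - 1 + 2*(k:ℤ)*q + 1) = (k:ℤ) + 2*(k:ℤ)*q + k := by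
    rw [pp_eq (by omega) (show 2*(k:ℤ) - 1 + 2*(k:ℤ)*q + 1 = 2*(k:ℤ)*(q+1) + 0 by ring) (by omega) (by push_cast; omega)]
    rw [bb, if_pos (by push_cast; omega)]
    simp [SS]
    try ring
  rw [h1, h2]

lemma bb_decomp (hk3 : 3 ≤ k) {s : ℤ} (h0 : 0 ≤ s) (h1 : s < 2*(k:ℤ)) :
    ∃ (μ : ℕ) (ε : ℤ), μ ≤ k-1 ∧ ((ε = 0 ∧ s = (μ:ℤ)) ∨ (ε = 1 ∧ s = 2*(k:ℤ)-1-(μ:ℤ))) ∧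
      bb k a s = SS k a μ + ε*(k:ℤ) := by
  by_cases hs : s < (k:ℤ)
  · exact ⟨s.toNat, 0, by omega, Or.inl ⟨rfl, by omega⟩, by rw [bb, if_pos hs]; simp⟩
  · refine ⟨(2*(k:ℤ)-1-s).toNat, 1, by omega, Or.inr ⟨rfl, by omega⟩, ?_⟩
    rw [bb, if_neg hs]; ring

lemma pinj (hcong : Hcong (k:=k) (a:=a)) (hk3 : 3 ≤ k) (hkodd : Odd k) {t t' : ℤ}
    (h : pp k a t = pp k a t') : t = t' := by
  have h2k : (0:ℤ) < 2*(k:ℤ) := by push_cast; omega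
  have ht : t = 2*(k:ℤ)*(t / (2*(k:ℤ))) + t % (2*(k:ℤ)) := (Int.mul_ediv_add_emod t (2*(k:ℤ))).symm
  have ht' : t' = 2*(k:ℤ)*(t' / (2*(k:ℤ))) + t' % (2*(k:ℤ)) := (Int.mul_ediv_add_emod t' (2*(k:ℤ))).symm
  have hu0 : 0 ≤ t % (2*(k:ℤ)) := Int.emod_nonneg t (ne_of_gt h2k)
  have hu1 : t % (2*(k:ℤ)) < 2*(k:ℤ) := Int.emod_lt_of_pos t h2k
  have hu0' : 0 ≤ t' % (2*(k:ℤ)) := Int.emod_nonneg t' (ne_of_gt h2k)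
  have hu1' : t' % (2*(k:ℤ)) < 2*(k:ℤ) := Int.emod_lt_of_pos t' h2k
  obtain ⟨μ, ε, hμ, hrec, hbb⟩ := bb_decomp (a:=a) hk3 hu0 hu1
  obtain ⟨μ', ε', hμ', hrec', hbb'⟩ := bb_decomp (a:=a) hk3 hu0' hu1'
  have hp : pp k a t = bb k a (t % (2*(k:ℤ))) + 2*(k:ℤ)*(t / (2*(k:ℤ))) := rfl
  have hp' : pp k a t' = bb k a (t' % (2*(k:ℤ))) + 2*(k:ℤ)*(t' / (2*(k:ℤ))) := rfl
  rw [hp, hp', hbb, hbb'] at h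
  have hdvd : (k:ℤ) ∣ (SS k a μ - SS k a μ') :=
    ⟨ε' - ε + 2*(t' / (2*(k:ℤ))) - 2*(t / (2*(k:ℤ))), by linarith⟩
  have hμμ : μ = μ' := SS_inj hcong hk3 hkodd hμ hμ' hdvd
  subst hμμ
  have hk0 : (k:ℤ) ≠ 0 := by positivity
  have hfac : (k:ℤ) * (ε + 2*(t / (2*(k:ℤ))) - ε' - 2*(t' / (2*(k:ℤ)))) = 0 := by linarith
  have hz : ε + 2*(t / (2*(k:ℤ))) - ε' - 2*(t' / (2*(k:ℤ))) = 0 :=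
    by rcases mul_eq_zero.mp hfac with h' | h'; exact absurd h' hk0; exact h'
  have hεε : ε = ε' ∧ t / (2*(k:ℤ)) = t' / (2*(k:ℤ)) := by
    rcases hrec with ⟨he, _⟩ | ⟨he, _⟩ <;> rcases hrec' with ⟨he', _⟩ | ⟨he', _⟩ <;>
      subst he <;> subst he' <;> omega
  have huu : t % (2*(k:ℤ)) = t' % (2*(k:ℤ)) := by
    rcases hrec with ⟨he, h2⟩ | ⟨he, h2⟩ <;> rcases hrec' with ⟨he', h2'⟩ | ⟨he', h2'⟩ <;> omega
  rw [ht, ht', hεε.2, huu]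

lemma psurj (hcong : Hcong (k:=k) (a:=a)) (hk3 : 3 ≤ k) (hkodd : Odd k) (n : ℤ) :
    ∃ t, pp k a t = n := by
  have hko : k % 2 = 1 := Nat.odd_iff.mp hkodd
  set ρ := n % (k:ℤ) with hρ
  have hk0 : (0:ℤ) < (k:ℤ) := by push_cast; omega
  have hρ0 : 0 ≤ ρ := Int.emod_nonneg n (ne_of_gt hk0)
  have hρ1 : ρ < k := Int.emod_lt_of_pos n hk0
  have hnρ : n - ρ = (k:ℤ)*(n / (k:ℤ)) := by rw [hρ, Int.emod_def]; ring
  obtain ⟨u₀, hu₀, hsg⟩ : ∃ u₀ : ℕ, u₀ ≤ k-1 ∧ (k:ℤ) ∣ (n - sg u₀) := by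
    by_cases h2 : 2*ρ < (k:ℤ)
    · by_cases h0 : ρ = 0
      · refine ⟨0, by omega, ?_⟩
        rw [sg]; simp
        exact ⟨n / (k:ℤ), by linarith [hnρ, h0 ▸ hnρ]⟩
      · refine ⟨(2*ρ-1).toNat, by omega, ?_⟩
        have he : ¬ Even (2*ρ-1).toNat := by rw [Nat.not_even_iff]; omega
        rw [sg, if_neg he]
        have : (((2*ρ-1).toNat/2 : ℕ) : ℤ) + 1 = ρ := by omega
        rw [this]
        exact ⟨n / (k:ℤ), by linarith⟩
    · refine ⟨(2*((k:ℤ)-ρ)).toNat, by omega, ?_⟩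
      have he : Even (2*((k:ℤ)-ρ)).toNat := by rw [Nat.even_iff]; omega
      rw [sg, if_pos he]
      have : -((((2*((k:ℤ)-ρ)).toNat/2 : ℕ)) : ℤ) = ρ - k := by omega
      rw [this]
      exact ⟨n / (k:ℤ) + 1, by linarith⟩
  have hdvd : (k:ℤ) ∣ (n - SS k a u₀) := by
    have h1 := SS_mod hcong u₀ hu₀
    have : n - SS k a u₀ = (n - sg u₀) - (SS k a u₀ - sg u₀) := by ring
    rw [this]; exact dvd_sub hsg h1
  set w := (n - SS k a u₀) / (k:ℤ) with hwdef
  have hw : (k:ℤ)*w = n - SS k a u₀ := Int.mul_ediv_cancel' hdvd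
  rcases Int.even_or_odd w with ⟨q, hq⟩ | ⟨q, hq⟩
  · refine ⟨(u₀:ℤ) + 2*(k:ℤ)*q, ?_⟩
    rw [pp_eq (by omega) (show (u₀:ℤ) + 2*(k:ℤ)*q = 2*(k:ℤ)*q + (u₀:ℤ) by ring)
      (by positivity) (by push_cast; omega)]
    rw [bb, if_pos (by push_cast; omega)]
    simp only [Int.toNat_natCast]
    rw [hq] at hw; linear_combination hw
  · refine ⟨2*(k:ℤ)-1-(u₀:ℤ) + 2*(k:ℤ)*q, ?_⟩
    rw [pp_eq (by omega) (show 2*(k:ℤ)-1-(u₀:ℤ) + 2*(k:ℤ)*q = 2*(k:ℤ)*q + (2*(k:ℤ)-1-(u₀:ℤ)) by ring)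
      (by push_cast; omega) (by push_cast; omega)]
    rw [bb, if_neg (by push_cast; omega), show (2*(k:ℤ)-1-(2*(k:ℤ)-1-(u₀:ℤ))).toNat = u₀ by omega]
    rw [hq] at hw; linear_combination hw

lemma ne_pp (hcong : Hcong (k:=k) (a:=a)) (hk3 : 3 ≤ k) (hkodd : Odd k) (t : ℤ) :
    pp k a t ≠ pp k a (t+1) := fun h => by
  have := pinj hcong hk3 hkodd h; omega

lemma mem_DD (hcong : Hcong (k:=k) (a:=a)) (hk3 : 3 ≤ k) (hkodd : Odd k) {c : ℤ} {e : Sym2 ℤ} :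
    e ∈ (DD k a c).edgeSet ↔ ∃ t, e = s(pp k a t + c, pp k a (t+1) + c) := by
  induction e with
  | _ u v =>
    rw [SimpleGraph.mem_edgeSet]
    constructor
    · rintro ⟨hne, t, ⟨h1, h2⟩ | ⟨h1, h2⟩⟩
      · exact ⟨t, by rw [h1, h2]⟩
      · exact ⟨t, by rw [h1, h2, Sym2.eq_swap]⟩
    · rintro ⟨t, he⟩
      rcases Sym2.eq_iff.mp he with ⟨h1, h2⟩ | ⟨h1, h2⟩
      · exact ⟨by rw [h1, h2]; intro hh; exact ne_pp hcong hk3 hkodd t (by omega), t, Or.inl ⟨h1, h2⟩⟩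
      · exact ⟨by rw [h1, h2]; intro hh; exact ne_pp hcong hk3 hkodd t (by omega), t, Or.inr ⟨h2, h1⟩⟩

lemma pair_eq {n₁ n₂ d₁ d₂ : ℤ} (h : s(n₁, n₁+d₁) = s(n₂, n₂+d₂)) (h1 : 0 < d₁) (h2 : 0 < d₂) :
    n₁ = n₂ ∧ d₁ = d₂ := by
  rcases Sym2.eq_iff.mp h with ⟨ha, hb⟩ | ⟨ha, hb⟩ <;> omega

lemma pair_shift {x y n m c : ℤ} (h : s(x,y) = s(n,m)) : s(x+c,y+c) = s(n+c,m+c) := by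
  rcases Sym2.eq_iff.mp h with ⟨ha, hb⟩ | ⟨ha, hb⟩
  · rw [ha, hb]
  · rw [ha, hb, Sym2.eq_swap]

lemma fwd (hk3 : 3 ≤ k) (t : ℤ) :
    (∃ (w : ℕ) (m : ℤ), w < k-1 ∧
      s(pp k a t, pp k a (t+1)) = s(xx k a w + m*(k:ℤ), xx k a w + m*(k:ℤ) + aa k a w)) ∨
    (∃ m : ℤ, s(pp k a t, pp k a (t+1)) = s(SS k a (k-1) + 2*(k:ℤ)*m, SS k a (k-1) + 2*(k:ℤ)*m + k)) ∨
    (∃ m : ℤ, s(pp k a t, pp k a (t+1)) = s((k:ℤ) + 2*(k:ℤ)*m, (k:ℤ) + 2*(k:ℤ)*m + k)) := by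
  have h2k : (0:ℤ) < 2*(k:ℤ) := by push_cast; omega
  have ht : t = 2*(k:ℤ)*(t / (2*(k:ℤ))) + t % (2*(k:ℤ)) := (Int.mul_ediv_add_emod t (2*(k:ℤ))).symm
  have hu0 : 0 ≤ t % (2*(k:ℤ)) := Int.emod_nonneg t (ne_of_gt h2k)
  have hu1 : t % (2*(k:ℤ)) < 2*(k:ℤ) := Int.emod_lt_of_pos t h2k
  set u := t % (2*(k:ℤ)) with hu
  set q := t / (2*(k:ℤ)) with hq
  by_cases hc1 : u < (k:ℤ)-1
  · left
    have hw : u.toNat < k - 1 := by omega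
    have e1 := E1 (a:=a) hk3 hw q
    rw [show ((u.toNat:ℤ)) = u from by omega, show u + 2*(k:ℤ)*q = t from by linarith] at e1
    exact ⟨u.toNat, 2*q, hw, e1⟩
  by_cases hc2 : u = (k:ℤ)-1
  · right; left
    have e2 := E2 (a:=a) hk3 q
    rw [show (k:ℤ) - 1 + 2*(k:ℤ)*q = t from by rw [← hc2]; linarith] at e2
    exact ⟨q, e2⟩
  by_cases hc3 : u ≤ 2*(k:ℤ)-2
  · left
    have hw : (2*(k:ℤ)-2-u).toNat < k - 1 := by omega
    have e3 := E3 (a:=a) hk3 hw q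
    rw [show (((2*(k:ℤ)-2-u).toNat:ℤ)) = 2*(k:ℤ)-2-u from by omega] at e3
    rw [show 2*(k:ℤ) - 2 - (2*(k:ℤ)-2-u) + 2*(k:ℤ)*q = t from by linarith] at e3
    exact ⟨(2*(k:ℤ)-2-u).toNat, 2*q+1, hw, e3⟩
  · right; right
    have e4 := E4 (a:=a) hk3 q
    rw [show 2*(k:ℤ) - 1 + 2*(k:ℤ)*q = t from by
      have : u = 2*(k:ℤ)-1 := by omega
      rw [← this]; linarith] at e4
    exact ⟨q, e4⟩

lemma diff_mem (hcong : Hcong (k:=k) (a:=a)) (hk3 : 3 ≤ k) (t : ℤ) :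
    ∃ d, (d ∈ Set.range a ∪ {(k:ℤ)}) ∧
      (pp k a t - pp k a (t+1) = d ∨ pp k a (t+1) - pp k a t = d) := by
  rcases fwd (a:=a) hk3 t with ⟨w, m, hw, he⟩ | ⟨m, he⟩ | ⟨m, he⟩
  · refine ⟨aa k a w, Set.mem_union_left _ ⟨⟨w, hw⟩, by rw [aa, dif_pos hw]⟩, ?_⟩
    rcases Sym2.eq_iff.mp he with ⟨h1, h2⟩ | ⟨h1, h2⟩ <;> omega
  · refine ⟨(k:ℤ), Set.mem_union_right _ rfl, ?_⟩
    rcases Sym2.eq_iff.mp he with ⟨h1, h2⟩ | ⟨h1, h2⟩ <;> omega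
  · refine ⟨(k:ℤ), Set.mem_union_right _ rfl, ?_⟩
    rcases Sym2.eq_iff.mp he with ⟨h1, h2⟩ | ⟨h1, h2⟩ <;> omega

lemma DD_le (hcong : Hcong (k:=k) (a:=a)) (hk3 : 3 ≤ k) (c : ℤ) :
    DD k a c ≤ cay (Set.range a ∪ {(k:ℤ)}) := by
  rintro u v ⟨hne, t, ⟨h1, h2⟩ | ⟨h1, h2⟩⟩ <;>
  · obtain ⟨d, hd, hor⟩ := diff_mem hcong hk3 t
    refine ⟨hne, ?_⟩
    rcases hor with h | h
    · first
      | exact Or.inl (by rw [show u - v = d from by omega]; exact hd)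
      | exact Or.inr (by rw [show v - u = d from by omega]; exact hd)
    · first
      | exact Or.inl (by rw [show u - v = d from by omega]; exact hd)
      | exact Or.inr (by rw [show v - u = d from by omega]; exact hd)

lemma DD_reach (hcong : Hcong (k:=k) (a:=a)) (hk3 : 3 ≤ k) (hkodd : Odd k) (c t : ℤ) (n : ℕ) :
    (DD k a c).Reachable (pp k a t + c) (pp k a (t+(n:ℤ)) + c) := by
  induction n with
  | zero =>
    rw [show t + ((0:ℕ):ℤ) = t from by simp]
  | succ n ih =>
    have hadj : (DD k a c).Adj (pp k a (t+(n:ℤ)) + c) (pp k a (t+(n:ℤ)+1) + c) := by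
      refine ⟨?_, t+(n:ℤ), Or.inl ⟨rfl, rfl⟩⟩
      intro hh
      exact ne_pp hcong hk3 hkodd (t+(n:ℤ)) (by omega)
    have : t + ((n+1:ℕ):ℤ) = t + (n:ℤ) + 1 := by push_cast; ring
    rw [this]
    exact ih.trans hadj.reachable

lemma DD_conn (hcong : Hcong (k:=k) (a:=a)) (hk3 : 3 ≤ k) (hkodd : Odd k) (c : ℤ) :
    (DD k a c).Connected := by
  rw [SimpleGraph.connected_iff]
  refine ⟨?_, ⟨0⟩⟩
  intro u v
  obtain ⟨s, hs⟩ := psurj hcong hk3 hkodd (u - c)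
  obtain ⟨t, htv⟩ := psurj hcong hk3 hkodd (v - c)
  have hu : u = pp k a s + c := by omega
  have hv : v = pp k a t + c := by omega
  rcases le_total s t with hle | hle
  · have hr := DD_reach hcong hk3 hkodd c s (t-s).toNat
    rw [show s + (((t-s).toNat:ℕ):ℤ) = t from by omega] at hr
    rw [hu, hv]; exact hr
  · have hr := DD_reach hcong hk3 hkodd c t (s-t).toNat
    rw [show t + (((s-t).toNat:ℕ):ℤ) = s from by omega] at hr
    rw [hu, hv]; exact hr.symm

lemma DD_deg (hcong : Hcong (k:=k) (a:=a)) (hk3 : 3 ≤ k) (hkodd : Odd k) (c v : ℤ) :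
    ((DD k a c).neighborSet v).ncard = 2 := by
  obtain ⟨t₀, ht₀⟩ := psurj hcong hk3 hkodd (v - c)
  have hv : v = pp k a t₀ + c := by omega
  have hset : (DD k a c).neighborSet v = {pp k a (t₀-1) + c, pp k a (t₀+1) + c} := by
    ext w
    simp only [SimpleGraph.mem_neighborSet, Set.mem_insert_iff, Set.mem_singleton_iff]
    constructor
    · rintro ⟨hne, t, ⟨h1, h2⟩ | ⟨h1, h2⟩⟩
      · have hpe : pp k a t = pp k a t₀ := by omega
        have htt := pinj hcong hk3 hkodd hpe
        right; rw [h2, htt]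
      · have hpe : pp k a (t+1) = pp k a t₀ := by omega
        have htt := pinj hcong hk3 hkodd hpe
        left; rw [h1, show t = t₀ - 1 from by omega]
    · rintro (hw | hw)
      · refine ⟨?_, t₀ - 1, Or.inr ⟨hw, by rw [hv, show t₀ - 1 + 1 = t₀ from by ring]⟩⟩
        intro hh
        have hpe : pp k a (t₀-1) = pp k a t₀ := by omega
        have := pinj hcong hk3 hkodd hpe; omega
      · refine ⟨?_, t₀, Or.inl ⟨hv, hw⟩⟩
        intro hh
        have hpe : pp k a (t₀+1) = pp k a t₀ := by omega
        have := pinj hcong hk3 hkodd hpe; omega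
  rw [hset]
  apply Set.ncard_pair
  intro hh
  have hpe : pp k a (t₀-1) = pp k a (t₀+1) := by omega
  have := pinj hcong hk3 hkodd hpe; omega

lemma aa_pos (hapos : ∀ i, 0 < a i) {w : ℕ} (hw : w < k-1) : 0 < aa k a w := by
  rw [aa, dif_pos hw]; exact hapos _

lemma SS_even (heven : Even (∑ i, a i)) : (2:ℤ) ∣ SS k a (k-1) := by
  have h1 : (2:ℤ) ∣ (SS k a (k-1) - ∑ t ∈ Finset.range (k-1), aa k a t) := by
    rw [SS, ← Finset.sum_sub_distrib]
    apply Finset.dvd_sum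
    intro t _
    have : (-1:ℤ)^t * aa k a t - aa k a t = ((-1:ℤ)^t - 1) * aa k a t := by ring
    rw [this]
    apply dvd_mul_of_dvd_left
    rcases Nat.even_or_odd t with he | ho
    · rw [he.neg_one_pow]; norm_num
    · rw [ho.neg_one_pow]; norm_num
  have h2 : ∑ t ∈ Finset.range (k-1), aa k a t = ∑ i, a i := by
    rw [← Fin.sum_univ_eq_sum_range (fun t => aa k a t) (k-1)]
    apply Finset.sum_congr rfl
    intro i _
    rw [aa, dif_pos i.2]
  obtain ⟨z, hz⟩ := heven
  have : SS k a (k-1) = (SS k a (k-1) - ∑ t ∈ Finset.range (k-1), aa k a t) + (z + z) := by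
    rw [h2, hz]; ring
  rw [this]
  exact dvd_add h1 ⟨z, by ring⟩

lemma edge_form (hcong : Hcong (k:=k) (a:=a)) (hk3 : 3 ≤ k) (hkodd : Odd k) {c : ℤ} {e : Sym2 ℤ}
    (he : e ∈ (DD k a c).edgeSet) :
    ∃ n d, e = s(n, n+d) ∧
      ((∃ (w : ℕ) (m : ℤ), w < k-1 ∧ d = aa k a w ∧ n = xx k a w + m*(k:ℤ) + c) ∨
       (∃ m : ℤ, d = (k:ℤ) ∧ n = SS k a (k-1) + 2*(k:ℤ)*m + c) ∨
       (∃ m : ℤ, d = (k:ℤ) ∧ n = (k:ℤ) + 2*(k:ℤ)*m + c)) := by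
  obtain ⟨t, hte⟩ := (mem_DD hcong hk3 hkodd).mp he
  rcases fwd (a:=a) hk3 t with ⟨w, m, hw, hf⟩ | ⟨m, hf⟩ | ⟨m, hf⟩
  · refine ⟨xx k a w + m*(k:ℤ) + c, aa k a w,
      by rw [hte, pair_shift hf]; exact smk rfl (by ring), Or.inl ⟨w, m, hw, rfl, rfl⟩⟩
  · exact ⟨SS k a (k-1) + 2*(k:ℤ)*m + c, (k:ℤ),
      by rw [hte, pair_shift hf]; exact smk rfl (by ring), Or.inr (Or.inl ⟨m, rfl, rfl⟩)⟩
  · exact ⟨(k:ℤ) + 2*(k:ℤ)*m + c, (k:ℤ),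
      by rw [hte, pair_shift hf]; exact smk rfl (by ring), Or.inr (Or.inr ⟨m, rfl, rfl⟩)⟩

lemma aa_eq_w (hcong : Hcong (k:=k) (a:=a)) (hk3 : 3 ≤ k) {w w' : ℕ} (hw : w < k-1)
    (hw' : w' < k-1) (h : aa k a w = aa k a w') : w = w' := by
  have h1 := aa_cong hcong w hw
  have h2 := aa_cong hcong w' hw'
  have hd : (k:ℤ) ∣ ((w:ℤ) - (w':ℤ)) := by
    have : (w:ℤ) - w' = (aa k a w' - ((w':ℤ)+1)) - (aa k a w - ((w:ℤ)+1)) := by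
      rw [h]; ring
    rw [this]
    exact dvd_sub h2 h1
  have := int_small_zero hd (by omega) (by omega)
  omega

lemma aa_ne_k (hcong : Hcong (k:=k) (a:=a)) (hk3 : 3 ≤ k) {w : ℕ} (hw : w < k-1) :
    aa k a w ≠ (k:ℤ) := by
  intro h
  have h1 := aa_cong hcong w hw
  rw [h] at h1
  have hd : (k:ℤ) ∣ ((w:ℤ) + 1) := by
    have : (w:ℤ) + 1 = (k:ℤ) - ((k:ℤ) - ((w:ℤ)+1)) := by ring
    rw [this]
    exact dvd_sub (dvd_refl _) h1
  have := int_small_zero hd (by omega) (by omega)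
  omega

lemma DD_disj (hcong : Hcong (k:=k) (a:=a)) (hk3 : 3 ≤ k) (hkodd : Odd k)
    (hapos : ∀ i, 0 < a i) (heven : Even (∑ i, a i)) {i j : Fin k} (hij : i ≠ j) :
    Disjoint (DD k a (2*(i:ℤ))).edgeSet (DD k a (2*(j:ℤ))).edgeSet := by
  rw [Set.disjoint_left]
  intro e hei hej
  exfalso
  obtain ⟨n, d, he1, hc1⟩ := edge_form hcong hk3 hkodd hei
  obtain ⟨n', d', he2, hc2⟩ := edge_form hcong hk3 hkodd hej
  have hko : k % 2 = 1 := Nat.odd_iff.mp hkodd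
  have hd0 : 0 < d := by
    rcases hc1 with ⟨w, m, hw, hd, _⟩ | ⟨m, hd, _⟩ | ⟨m, hd, _⟩
    · rw [hd]; exact aa_pos hapos hw
    · rw [hd]; push_cast; omega
    · rw [hd]; push_cast; omega
  have hd0' : 0 < d' := by
    rcases hc2 with ⟨w, m, hw, hd, _⟩ | ⟨m, hd, _⟩ | ⟨m, hd, _⟩
    · rw [hd]; exact aa_pos hapos hw
    · rw [hd]; push_cast; omega
    · rw [hd]; push_cast; omega
  obtain ⟨hnn, hdd⟩ := pair_eq (by rw [← he1, he2]) hd0 hd0'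
  have hij2 : (i:ℤ) ≠ (j:ℤ) := by
    intro h; exact hij (Fin.ext (by omega))
  have hib : (i:ℤ) < k := by have := i.2; omega
  have hjb : (j:ℤ) < k := by have := j.2; omega
  have hi0 : 0 ≤ (i:ℤ) := by positivity
  have hj0 : 0 ≤ (j:ℤ) := by positivity
  have hSe := SS_even (a:=a) heven
  rcases hc1 with ⟨w, m, hw, hd, hn⟩ | ⟨m, hd, hn⟩ | ⟨m, hd, hn⟩ <;>
    rcases hc2 with ⟨w', m', hw', hd', hn'⟩ | ⟨m', hd', hn'⟩ | ⟨m', hd', hn'⟩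
  · -- fam1 fam1
    have hww : w = w' := aa_eq_w hcong hk3 hw hw' (by rw [← hd, ← hd', hdd])
    subst hww
    rw [hn, hn'] at hnn
    have hy : 2*(i:ℤ) - 2*(j:ℤ) = (k:ℤ)*(m'-m) := by linarith
    have hev : Even ((k:ℤ)*(m'-m)) := by
      rw [← hy]; exact ⟨(i:ℤ)-(j:ℤ), by ring⟩
    rcases Int.even_mul.mp hev with hek | hem
    · rw [Int.even_coe_nat] at hek
      rw [Nat.even_iff] at hek; omega
    · obtain ⟨y, hy2⟩ := hem
      have h3 : (k:ℤ)*(m'-m) = 2*((k:ℤ)*y) := by rw [hy2]; ring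
      have h4 : (i:ℤ) - (j:ℤ) = (k:ℤ)*y := by linarith
      have := int_small_zero ⟨y, h4⟩ (by omega) (by omega)
      omega
  · exact aa_ne_k hcong hk3 hw (by rw [← hd, ← hd', hdd])
  · exact aa_ne_k hcong hk3 hw (by rw [← hd, ← hd', hdd])
  · exact aa_ne_k hcong hk3 hw' (by rw [← hd', ← hd, ← hdd])
  · -- fam2 fam2
    rw [hn, hn'] at hnn
    have h4 : (i:ℤ) - (j:ℤ) = (k:ℤ)*(m'-m) := by linarith
    have := int_small_zero ⟨m'-m, h4⟩ (by omega) (by omega)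
    omega
  · -- fam2 fam3
    rw [hn, hn'] at hnn
    obtain ⟨Z, hZ⟩ := hSe
    have h4 : (k:ℤ) = 2*(Z + (k:ℤ)*m + (i:ℤ) - (k:ℤ)*m' - (j:ℤ)) := by linarith
    omega
  · exact aa_ne_k hcong hk3 hw' (by rw [← hd', ← hd, ← hdd])
  · -- fam3 fam2
    rw [hn, hn'] at hnn
    obtain ⟨Z, hZ⟩ := hSe
    have h4 : (k:ℤ) = 2*(Z + (k:ℤ)*m' + (j:ℤ) - (k:ℤ)*m - (i:ℤ)) := by linarith
    omega
  · -- fam3 fam3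
    rw [hn, hn'] at hnn
    have h4 : (i:ℤ) - (j:ℤ) = (k:ℤ)*(m'-m) := by linarith
    have := int_small_zero ⟨m'-m, h4⟩ (by omega) (by omega)
    omega

lemma DD_cover (hcong : Hcong (k:=k) (a:=a)) (hk3 : 3 ≤ k) (hkodd : Odd k)
    (hapos : ∀ i, 0 < a i) (heven : Even (∑ i, a i)) {e : Sym2 ℤ}
    (he : e ∈ (cay (Set.range a ∪ {(k:ℤ)})).edgeSet) :
    ∃ i : Fin k, e ∈ (DD k a (2*(i:ℤ))).edgeSet := by
  have hko : k % 2 = 1 := Nat.odd_iff.mp hkodd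
  have hk0 : (0:ℤ) < (k:ℤ) := by push_cast; omega
  induction e with
  | _ u v =>
    rw [SimpleGraph.mem_edgeSet] at he
    obtain ⟨hne, hor⟩ := he
    obtain ⟨n, d, hdS, hedge⟩ : ∃ n d, d ∈ Set.range a ∪ {(k:ℤ)} ∧ s(u,v) = s(n, n+d) := by
      rcases hor with h | h
      · exact ⟨v, u - v, h, by rw [Sym2.eq_swap]; exact smk rfl (by ring)⟩
      · exact ⟨u, v - u, h, smk rfl (by ring)⟩
    rcases hdS with ⟨ii, hai⟩ | hk
    · -- difference a ii
      set w := (ii:ℕ) with hwdef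
      have hw : w < k-1 := ii.2
      have haw : aa k a w = d := by
        rw [aa, dif_pos hw, ← hai]
      set X := (n - xx k a w)*(((k:ℤ)+1)/2) with hX
      set z := X % (k:ℤ) with hz
      have hz0 : 0 ≤ z := Int.emod_nonneg X (ne_of_gt hk0)
      have hz1 : z < k := Int.emod_lt_of_pos X hk0
      have h2 : 2*(((k:ℤ)+1)/2) = (k:ℤ)+1 := by omega
      have hXz : X - z = (k:ℤ)*(X/(k:ℤ)) := by rw [hz, Int.emod_def]; ring
      have hdvd : (k:ℤ) ∣ (n - xx k a w - 2*z) :=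
        ⟨2*(X/(k:ℤ)) - (n - xx k a w), by linear_combination 2*hXz - (n - xx k a w)*h2⟩
      set m := (n - xx k a w - 2*z) / (k:ℤ) with hm
      have hmk : (k:ℤ)*m = n - xx k a w - 2*z := Int.mul_ediv_cancel' hdvd
      refine ⟨⟨z.toNat, by omega⟩, ?_⟩
      have hjz : ((⟨z.toNat, by omega⟩ : Fin k) : ℤ) = z := by
        simp only [Fin.val_mk]; omega
      rw [mem_DD hcong hk3 hkodd]
      rcases Int.even_or_odd m with ⟨q, hq⟩ | ⟨q, hq⟩
      · refine ⟨(w:ℤ) + 2*(k:ℤ)*q, ?_⟩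
        rw [hedge, hjz, pair_shift (E1 (a:=a) hk3 hw q)]
        rw [hq] at hmk
        exact smk (by linear_combination -hmk) (by rw [← haw]; linear_combination -hmk)
      · refine ⟨2*(k:ℤ) - 2 - (w:ℤ) + 2*(k:ℤ)*q, ?_⟩
        rw [hedge, hjz, pair_shift (E3 (a:=a) hk3 hw q)]
        rw [hq] at hmk
        exact smk (by linear_combination -hmk) (by rw [← haw]; linear_combination -hmk)
    · -- difference k
      have hdk : d = (k:ℤ) := hk
      subst hdk
      have hSe := SS_even (a:=a) heven
      obtain ⟨Z, hZ⟩ := hSe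
      rcases Int.even_or_odd (n - SS k a (k-1)) with ⟨y, hy⟩ | ⟨y, hy⟩
      · -- use E2
        set z := y % (k:ℤ) with hz
        have hz0 : 0 ≤ z := Int.emod_nonneg y (ne_of_gt hk0)
        have hz1 : z < k := Int.emod_lt_of_pos y hk0
        have hyz : (k:ℤ)*(y/(k:ℤ)) + z = y := Int.mul_ediv_add_emod y (k:ℤ)
        refine ⟨⟨z.toNat, by omega⟩, ?_⟩
        have hjz : ((⟨z.toNat, by omega⟩ : Fin k) : ℤ) = z := by
          simp only [Fin.val_mk]; omega
        rw [mem_DD hcong hk3 hkodd]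
        refine ⟨(k:ℤ) - 1 + 2*(k:ℤ)*(y/(k:ℤ)), ?_⟩
        rw [hedge, hjz, pair_shift (E2 (a:=a) hk3 (y/(k:ℤ)))]
        exact smk (by linear_combination hy - 2*hyz) (by linear_combination hy - 2*hyz)
      · -- use E4 : n odd relative; n - k is even multiple structure
        have hy2 : ∃ y2, n - (k:ℤ) = 2*y2 := by
          refine ⟨y + Z + 1 - ((k:ℤ)+1)/2, ?_⟩
          omega
        obtain ⟨y2, hy2⟩ := hy2
        set z := y2 % (k:ℤ) with hz
        have hz0 : 0 ≤ z := Int.emod_nonneg y2 (ne_of_gt hk0)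
        have hz1 : z < k := Int.emod_lt_of_pos y2 hk0
        have hyz : (k:ℤ)*(y2/(k:ℤ)) + z = y2 := Int.mul_ediv_add_emod y2 (k:ℤ)
        refine ⟨⟨z.toNat, by omega⟩, ?_⟩
        have hjz : ((⟨z.toNat, by omega⟩ : Fin k) : ℤ) = z := by
          simp only [Fin.val_mk]; omega
        rw [mem_DD hcong hk3 hkodd]
        refine ⟨2*(k:ℤ) - 1 + 2*(k:ℤ)*(y2/(k:ℤ)), ?_⟩
        rw [hedge, hjz, pair_shift (E4 (a:=a) hk3 (y2/(k:ℤ)))]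
        exact smk (by linear_combination hy2 - 2*hyz) (by linear_combination hy2 - 2*hyz)

end HD

theorem stmt13 (k : ℕ) (hk3 : 3 ≤ k) (hkodd : Odd k)
    (a : Fin (k-1) → ℤ) (hapos : ∀ i, 0 < a i) (hainj : Function.Injective a)
    (hcong : ∀ i, a i % (k : ℤ) = (((i : ℕ) : ℤ) + 1) % (k : ℤ))
    (heven : Even (∑ i, a i)) :
    HamDecomp (cay (Set.range a ∪ {(k : ℤ)})) k := by
  have hcong' : HD.Hcong (k:=k) (a:=a) := hcong
  refine ⟨fun j => HD.DD k a (2*(j:ℤ)), ?_, ?_, ?_⟩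
  · intro i
    exact ⟨HD.DD_le hcong' hk3 _, HD.DD_conn hcong' hk3 hkodd _,
      HD.DD_deg hcong' hk3 hkodd _⟩
  · intro i j hij
    exact HD.DD_disj hcong' hk3 hkodd hapos heven hij
  · intro e he
    exact HD.DD_cover hcong' hk3 hkodd hapos heven he
end
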